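/- arXiv:2007.02988 — 6 statements merged into one kernel-verified Lean document; each statement's English description precedes it below -/
import Mathlib

section
/- Let R be an integral domain with at least two units and let n ≥ 2. Then the image of U_n(R) under the quotient map B_n(R) → PB_n(R) is a nilpotent normal subgroup of PB_n(R) that contains every nilpotent normal subgroup of PB_n(R); in particular it is the unique maximal normal nilpotent subgroup of PB_n(R), and hence it is invariant under every automorphism of PB_n(R). -/
open Matrix

/-- The `φ`-twisted conjugacy class of `g`. -/
def TwistedConjClass {G : Type*} [Group G] (φ : G ≃* G) (g : G) : Set G :=
  {h | ∃ x : G, h = x * g * (φ x)⁻¹}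

/-- The set of Reidemeister (twisted conjugacy) classes of `φ`. -/
def ReidemeisterClasses {G : Type*} [Group G] (φ : G ≃* G) : Set (Set G) :=
  Set.range (TwistedConjClass φ)

/-- A group has property `R∞` if every automorphism has infinitely many
twisted conjugacy classes. -/
def PropertyRInfinity (G : Type*) [Group G] : Prop :=
  ∀ φ : G ≃* G, (ReidemeisterClasses φ).Infinite

section Matrices

variable (n : ℕ) (R : Type*) [CommRing R]

/-- `B_n(R)`: the subgroup of upper triangular matrices in `GL_n(R)`. -/
def BorelGL : Subgroup (GL (Fin n) R) where
  carrier := {M | Matrix.BlockTriangular (M : Matrix (Fin n) (Fin n) R) id}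
  one_mem' := by
    simpa using Matrix.blockTriangular_one (m := Fin n) (R := R) (b := id)
  mul_mem' := by
    intro a b ha hb
    simpa [Units.val_mul] using Matrix.BlockTriangular.mul ha hb
  inv_mem' := by
    intro a ha
    have : Invertible ((a : Matrix (Fin n) (Fin n) R)) := a.invertible
    simpa [Matrix.coe_units_inv] using Matrix.blockTriangular_inv_of_blockTriangular ha

lemma diag_mul_of_blockTriangular {n : ℕ} {R : Type*} [CommRing R]
    {A B : Matrix (Fin n) (Fin n) R} (hA : A.BlockTriangular id)
    (hB : B.BlockTriangular id) (i : Fin n) :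
    (A * B) i i = A i i * B i i := by
  rw [Matrix.mul_apply]
  apply Finset.sum_eq_single_of_mem i (Finset.mem_univ i)
  intro k _ hk
  rcases lt_or_gt_of_ne hk with h | h
  · rw [hA h, zero_mul]
  · rw [hB h, mul_zero]

/-- `U_n(R)`: the subgroup of upper unitriangular matrices in `GL_n(R)`. -/
def Unitri : Subgroup (GL (Fin n) R) where
  carrier := {M | Matrix.BlockTriangular (M : Matrix (Fin n) (Fin n) R) id ∧
    ∀ i, (M : Matrix (Fin n) (Fin n) R) i i = 1}
  one_mem' := by
    refine ⟨by simpa using Matrix.blockTriangular_one (m := Fin n) (R := R) (b := id), ?_⟩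
    intro i
    simp
  mul_mem' := by
    intro a b ha hb
    refine ⟨by simpa [Units.val_mul] using Matrix.BlockTriangular.mul ha.1 hb.1, ?_⟩
    intro i
    have := diag_mul_of_blockTriangular ha.1 hb.1 i
    simp only [Units.val_mul]
    rw [this, ha.2 i, hb.2 i, one_mul]
  inv_mem' := by
    intro a ha
    have hinst : Invertible ((a : Matrix (Fin n) (Fin n) R)) := a.invertible
    have hinv : Matrix.BlockTriangular ((a⁻¹ : GL (Fin n) R) : Matrix (Fin n) (Fin n) R) id := by
      simpa [Matrix.coe_units_inv] using Matrix.blockTriangular_inv_of_blockTriangular ha.1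
    refine ⟨hinv, ?_⟩
    intro i
    have h1 : ((a : Matrix (Fin n) (Fin n) R) * ((a⁻¹ : GL (Fin n) R) : Matrix (Fin n) (Fin n) R)) = 1 := by
      rw [← Units.val_mul, mul_inv_cancel, Units.val_one]
    have := diag_mul_of_blockTriangular ha.1 hinv i
    rw [h1] at this
    have h2 : (1 : Matrix (Fin n) (Fin n) R) i i = 1 := Matrix.one_apply_eq i
    rw [h2, ha.2 i, one_mul] at this
    exact this.symm

/-- `Z_n(R)`: the subgroup of scalar matrices `u·1` with `u ∈ Rˣ`. -/
def ScalarZ : Subgroup (GL (Fin n) R) :=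
  (Units.map (Matrix.scalar (Fin n) : R →+* Matrix (Fin n) (Fin n) R).toMonoidHom).range

/-- `U_n(R)` as a subgroup of `B_n(R)`. -/
def UB : Subgroup (BorelGL n R) :=
  (Unitri n R).comap (BorelGL n R).subtype

/-- `Z_n(R)` as a subgroup of `B_n(R)`. -/
def ZB : Subgroup (BorelGL n R) :=
  (ScalarZ n R).comap (BorelGL n R).subtype

instance ZB_normal : (ZB n R).Normal := by
  constructor
  intro x hmem g
  obtain ⟨u, hu⟩ := hmem
  refine ⟨u, ?_⟩
  have hcomm : ((x : GL (Fin n) R) : Matrix (Fin n) (Fin n) R) *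
      ((g : GL (Fin n) R) : Matrix (Fin n) (Fin n) R) =
      ((g : GL (Fin n) R) : Matrix (Fin n) (Fin n) R) *
      ((x : GL (Fin n) R) : Matrix (Fin n) (Fin n) R) := by
    have : ((x : GL (Fin n) R) : Matrix (Fin n) (Fin n) R) = Matrix.scalar (Fin n) (u : R) := by
      have := congrArg (Units.val) hu
      simpa using this.symm
    rw [this]
    exact (Matrix.scalar_commute (u : R) (fun r' => mul_comm _ _) _).eq
  have key : ((g * x * g⁻¹ : BorelGL n R) : GL (Fin n) R) = (x : GL (Fin n) R) := by
    push_cast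
    have : ((g : GL (Fin n) R) * (x : GL (Fin n) R)) = ((x : GL (Fin n) R) * (g : GL (Fin n) R)) := by
      ext1
      simpa [Units.val_mul] using hcomm.symm
    rw [this, mul_assoc, mul_inv_cancel, mul_one]
  show (Units.map (Matrix.scalar (Fin n) : R →+* Matrix (Fin n) (Fin n) R).toMonoidHom) u =
    ((g * x * g⁻¹ : BorelGL n R) : GL (Fin n) R)
  rw [key]
  exact hu

end Matrices

section Proj

variable (n : ℕ) (R : Type*) [CommRing R]

/-- `PB_n(R) = B_n(R)/Z_n(R)`: the projective upper triangular group. -/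
abbrev PB := ↥(BorelGL n R) ⧸ ZB n R

end Proj

section Affine

variable (R : Type*) [CommRing R]

/-- `Aff(R)`: the group of affine transformations of `R`, as matrices
with rows `(u, r)` and `(0, 1)` in `GL_2(R)`. -/
def AffGL : Subgroup (GL (Fin 2) R) where
  carrier := {M | (M : Matrix (Fin 2) (Fin 2) R) 1 0 = 0 ∧
    (M : Matrix (Fin 2) (Fin 2) R) 1 1 = 1}
  one_mem' := by constructor <;> simp [Matrix.one_apply]
  mul_mem' := by
    intro a b ha hb
    constructor <;>
      simp [Units.val_mul, Matrix.mul_apply, Fin.sum_univ_two, ha.1, ha.2, hb.1, hb.2]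
  inv_mem' := by
    intro a ha
    have h1 : ((a : Matrix (Fin 2) (Fin 2) R) *
        ((a⁻¹ : GL (Fin 2) R) : Matrix (Fin 2) (Fin 2) R)) = 1 := by
      rw [← Units.val_mul, mul_inv_cancel, Units.val_one]
    have h10 : ((a : Matrix (Fin 2) (Fin 2) R) *
        ((a⁻¹ : GL (Fin 2) R) : Matrix (Fin 2) (Fin 2) R)) 1 0 =
        (1 : Matrix (Fin 2) (Fin 2) R) 1 0 := by rw [h1]
    have h11 : ((a : Matrix (Fin 2) (Fin 2) R) *
        ((a⁻¹ : GL (Fin 2) R) : Matrix (Fin 2) (Fin 2) R)) 1 1 =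
        (1 : Matrix (Fin 2) (Fin 2) R) 1 1 := by rw [h1]
    rw [Matrix.mul_apply, Fin.sum_univ_two, ha.1, ha.2] at h10 h11
    simp only [Matrix.one_apply, zero_mul, one_mul, zero_add] at h10 h11
    constructor
    · simpa using h10
    · simpa using h11

lemma blockTriangular_fin_two {R : Type*} [CommRing R] {M : Matrix (Fin 2) (Fin 2) R}
    (h : M 1 0 = 0) : M.BlockTriangular id := by
  intro i j hij
  fin_cases i <;> fin_cases j <;> first | exact h | exact absurd hij (by decide)

lemma unitri_conj_mem {n : ℕ} {R : Type*} [CommRing R] {g x : GL (Fin n) R}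
    (hg : Matrix.BlockTriangular (g : Matrix (Fin n) (Fin n) R) id)
    (hx : x ∈ Unitri n R) : g * x * g⁻¹ ∈ Unitri n R := by
  have : Invertible ((g : Matrix (Fin n) (Fin n) R)) := g.invertible
  have hginv : Matrix.BlockTriangular ((g⁻¹ : GL (Fin n) R) : Matrix (Fin n) (Fin n) R) id := by
    simpa [Matrix.coe_units_inv] using Matrix.blockTriangular_inv_of_blockTriangular hg
  have hgg : ∀ i, (g : Matrix (Fin n) (Fin n) R) i i *
      ((g⁻¹ : GL (Fin n) R) : Matrix (Fin n) (Fin n) R) i i = 1 := by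
    intro i
    have h1 : ((g : Matrix (Fin n) (Fin n) R) *
        ((g⁻¹ : GL (Fin n) R) : Matrix (Fin n) (Fin n) R)) = 1 := by
      rw [← Units.val_mul, mul_inv_cancel, Units.val_one]
    have := diag_mul_of_blockTriangular hg hginv i
    rw [h1, Matrix.one_apply_eq] at this
    exact this.symm
  constructor
  · simpa [Units.val_mul] using (hg.mul hx.1).mul hginv
  · intro i
    have e1 : ((g * x * g⁻¹ : GL (Fin n) R) : Matrix (Fin n) (Fin n) R) =
        ((g : Matrix (Fin n) (Fin n) R) * (x : Matrix (Fin n) (Fin n) R)) *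
          ((g⁻¹ : GL (Fin n) R) : Matrix (Fin n) (Fin n) R) := by
      simp [Units.val_mul]
    rw [e1, diag_mul_of_blockTriangular (hg.mul hx.1) hginv i,
      diag_mul_of_blockTriangular hg hx.1 i, hx.2 i, mul_one, hgg i]

/-- `U_2(R)` as a subgroup of `Aff(R)`. -/
def UAff : Subgroup ↥(AffGL R) := (Unitri 2 R).comap (AffGL R).subtype

instance UAff_normal : (UAff R).Normal := by
  constructor
  intro x hx g
  show ((g * x * g⁻¹ : ↥(AffGL R)) : GL (Fin 2) R) ∈ Unitri 2 R
  have : ((g * x * g⁻¹ : ↥(AffGL R)) : GL (Fin 2) R) =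
      (g : GL (Fin 2) R) * (x : GL (Fin 2) R) * (g : GL (Fin 2) R)⁻¹ := by
    push_cast
    ring_nf
  rw [this]
  exact unitri_conj_mem (blockTriangular_fin_two g.2.1) hx

end Affine

section Additive

/-- For an additive endomorphism `f` of `A`, the subgroup `{a - f a | a ∈ A}`. -/
def diffSubgroup {A : Type*} [AddCommGroup A] (f : A →+ A) : AddSubgroup A :=
  (AddMonoidHom.id A - f).range

/-- The subgroup `{(r - f s, s - f r) | r, s ∈ A}` of `A × A`. -/
def flipDiffSubgroup {A : Type*} [AddCommGroup A] (f : A →+ A) : AddSubgroup (A × A) :=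
  (AddMonoidHom.id (A × A) -
    ((f.comp (AddMonoidHom.snd A A)).prod (f.comp (AddMonoidHom.fst A A)))).range

/-- Twisted conjugacy class for an automorphism of an (additive) abelian group. -/
def AddTwistedConjClass {A : Type*} [AddCommGroup A] (α : A ≃+ A) (a : A) : Set A :=
  {b | ∃ x : A, b = x + a - α x}

def AddReidemeisterClasses {A : Type*} [AddCommGroup A] (α : A ≃+ A) : Set (Set A) :=
  Set.range (AddTwistedConjClass α)

def AddPropertyRInfinity (A : Type*) [AddCommGroup A] : Prop :=
  ∀ α : A ≃+ A, (AddReidemeisterClasses α).Infinite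

end Additive

section NilpotentAux

variable {n : ℕ} {R : Type*} [CommRing R]

/-- support: zero whenever `b < a + k`. -/
def SuppGe (k : ℕ) (P : Matrix (Fin n) (Fin n) R) : Prop :=
  ∀ a b : Fin n, (b : ℕ) < (a : ℕ) + k → P a b = 0

lemma SuppGe.mono {k l : ℕ} (h : k ≤ l) {P : Matrix (Fin n) (Fin n) R}
    (hP : SuppGe l P) : SuppGe k P := fun a b hb => hP a b (hb.trans_le (by omega))

lemma SuppGe.add {k : ℕ} {P Q : Matrix (Fin n) (Fin n) R} (hP : SuppGe k P)
    (hQ : SuppGe k Q) : SuppGe k (P + Q) := fun a b hb => by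
  simp [Matrix.add_apply, hP a b hb, hQ a b hb]

lemma SuppGe.neg {k : ℕ} {P : Matrix (Fin n) (Fin n) R} (hP : SuppGe k P) :
    SuppGe k (-P) := fun a b hb => by simp [hP a b hb]

lemma SuppGe.mul {k l : ℕ} {P Q : Matrix (Fin n) (Fin n) R} (hP : SuppGe k P)
    (hQ : SuppGe l Q) : SuppGe (k + l) (P * Q) := by
  intro a b hb
  rw [Matrix.mul_apply]
  apply Finset.sum_eq_zero
  intro c _
  by_cases hc : (c : ℕ) < (a : ℕ) + k
  · rw [hP a c hc, zero_mul]
  · rw [hQ c b (by omega), mul_zero]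

lemma suppGe_zero_of_blockTriangular {P : Matrix (Fin n) (Fin n) R}
    (h : P.BlockTriangular id) : SuppGe 0 P := fun a b hb => h (by simpa using hb)

lemma suppGe_sub_one {P : Matrix (Fin n) (Fin n) R} (h : P.BlockTriangular id)
    (hd : ∀ i, P i i = 1) : SuppGe 1 (P - 1) := by
  intro a b hb
  have hba : b ≤ a := by omega
  rcases lt_or_eq_of_le hba with hba | hba
  · simp [Matrix.sub_apply, h (show (id b : Fin n) < id a from hba),
      Matrix.one_apply_ne (Ne.symm (ne_of_lt hba))]
  · subst hba; simp [Matrix.sub_apply, hd]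

/-- coercion to matrices of the product of two subgroup elements. -/
lemma coe_coe_mul {G : Subgroup (GL (Fin n) R)} (u v : ↥G) :
    (((u * v : ↥G) : GL (Fin n) R) : Matrix (Fin n) (Fin n) R) =
      ((u : GL (Fin n) R) : Matrix (Fin n) (Fin n) R) *
      ((v : GL (Fin n) R) : Matrix (Fin n) (Fin n) R) := by
  rw [MulMemClass.coe_mul, Units.val_mul]

lemma coe_mul_coe_inv {G : Subgroup (GL (Fin n) R)} (u : ↥G) :
    ((u : GL (Fin n) R) : Matrix (Fin n) (Fin n) R) *
      (((u⁻¹ : ↥G) : GL (Fin n) R) : Matrix (Fin n) (Fin n) R) = 1 := by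
  rw [← coe_coe_mul, mul_inv_cancel, OneMemClass.coe_one, Units.val_one]

lemma coe_inv_mul_coe {G : Subgroup (GL (Fin n) R)} (u : ↥G) :
    (((u⁻¹ : ↥G) : GL (Fin n) R) : Matrix (Fin n) (Fin n) R) *
      ((u : GL (Fin n) R) : Matrix (Fin n) (Fin n) R) = 1 := by
  rw [← coe_coe_mul, inv_mul_cancel, OneMemClass.coe_one, Units.val_one]

variable (n R) in
def DSub (k : ℕ) : Subgroup ↥(Unitri n R) where
  carrier := {u | SuppGe k (((u : GL (Fin n) R) : Matrix (Fin n) (Fin n) R) - 1)}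
  one_mem' := by
    show SuppGe k _
    simp only [OneMemClass.coe_one, Units.val_one, sub_self]
    intro a b _; rfl
  mul_mem' := by
    intro u v hu hv
    show SuppGe k _
    have key : (((u * v : ↥(Unitri n R)) : GL (Fin n) R) : Matrix (Fin n) (Fin n) R) - 1 =
        (((u : GL (Fin n) R) : Matrix (Fin n) (Fin n) R) - 1) *
          (((v : GL (Fin n) R) : Matrix (Fin n) (Fin n) R) - 1) +
        ((((u : GL (Fin n) R) : Matrix (Fin n) (Fin n) R) - 1) +
          ((((v : GL (Fin n) R) : Matrix (Fin n) (Fin n) R)) - 1)) := by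
      rw [coe_coe_mul]; noncomm_ring
    rw [key]
    exact ((hu.mul hv).mono (by omega)).add (hu.add hv)
  inv_mem' := by
    intro u hu
    show SuppGe k _
    have key : (((u⁻¹ : ↥(Unitri n R)) : GL (Fin n) R) : Matrix (Fin n) (Fin n) R) - 1 =
        -((((u : GL (Fin n) R) : Matrix (Fin n) (Fin n) R) - 1) *
          (((u⁻¹ : ↥(Unitri n R)) : GL (Fin n) R) : Matrix (Fin n) (Fin n) R)) := by
      rw [sub_mul, one_mul, coe_mul_coe_inv, neg_sub]
    rw [key]
    have htri : SuppGe 0 ((((u⁻¹ : ↥(Unitri n R)) : GL (Fin n) R)) : Matrix (Fin n) (Fin n) R) :=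
      suppGe_zero_of_blockTriangular (u⁻¹).2.1
    simpa using (hu.mul htri).neg

theorem unitri_nilpotent : Group.IsNilpotent ↥(Unitri n R) := by
  rw [nilpotent_iff_lowerCentralSeries]
  refine ⟨n, le_bot_iff.mp ?_⟩
  have main : ∀ k, Subgroup.lowerCentralSeries (⊤ : Subgroup ↥(Unitri n R)) k ≤ DSub n R (k + 1) := by
    intro k
    induction k with
    | zero =>
      intro u _
      exact suppGe_sub_one u.2.1 u.2.2
    | succ k ih =>
      rw [Subgroup.lowerCentralSeries_succ]
      refine (Subgroup.closure_le _).mpr ?_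
      rintro x ⟨p, hp, q, -, rfl⟩
      have hp' : SuppGe (k+1) (((p : GL (Fin n) R) : Matrix (Fin n) (Fin n) R) - 1) := ih hp
      have hq' : SuppGe 1 (((q : GL (Fin n) R) : Matrix (Fin n) (Fin n) R) - 1) :=
        suppGe_sub_one q.2.1 q.2.2
      show SuppGe (k+2) _
      set U : Matrix (Fin n) (Fin n) R := ((p : GL (Fin n) R) : Matrix (Fin n) (Fin n) R) with hU
      set V : Matrix (Fin n) (Fin n) R := ((q : GL (Fin n) R) : Matrix (Fin n) (Fin n) R) with hV
      have key : (((p * q * p⁻¹ * q⁻¹ : ↥(Unitri n R)) : GL (Fin n) R) : Matrix (Fin n) (Fin n) R) - 1 =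
          ((U - 1) * (V - 1) - (V - 1) * (U - 1)) *
            ((((q * p : ↥(Unitri n R))⁻¹ : ↥(Unitri n R)) : GL (Fin n) R) : Matrix (Fin n) (Fin n) R) := by
        have hEq : p * q * p⁻¹ * q⁻¹ = (p * q) * (q * p)⁻¹ := by group
        rw [hEq, coe_coe_mul, coe_coe_mul]
        have hVU : (V * U) *
            ((((q * p : ↥(Unitri n R))⁻¹ : ↥(Unitri n R)) : GL (Fin n) R) : Matrix (Fin n) (Fin n) R) = 1 := by
          rw [hU, hV, ← coe_coe_mul, coe_mul_coe_inv]
        have expand : (U - 1) * (V - 1) - (V - 1) * (U - 1) = U * V - V * U := by noncomm_ring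
        rw [expand, sub_mul, hVU]
      rw [commutatorElement_def, key]
      have htri : SuppGe 0 ((((q * p : ↥(Unitri n R))⁻¹ : ↥(Unitri n R)) : GL (Fin n) R) : Matrix (Fin n) (Fin n) R) :=
        suppGe_zero_of_blockTriangular ((q*p)⁻¹).2.1
      have hcomm : SuppGe (k+2) ((U - 1) * (V - 1) - (V - 1) * (U - 1)) := by
        rw [sub_eq_add_neg]
        exact (hp'.mul hq').add (((hq'.mul hp').mono (by omega)).neg)
      simpa using hcomm.mul htri
  intro u hu
  have hsupp : SuppGe (n+1) (((u : GL (Fin n) R) : Matrix (Fin n) (Fin n) R) - 1) := main n hu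
  have hm : ((u : GL (Fin n) R) : Matrix (Fin n) (Fin n) R) = 1 := by
    have h0 : ((u : GL (Fin n) R) : Matrix (Fin n) (Fin n) R) - 1 = 0 := by
      ext a b
      exact hsupp a b (by omega)
    exact sub_eq_zero.mp h0
  have : u = 1 := Subtype.ext (Units.ext hm)
  simp [this]

end NilpotentAux

open scoped commutatorElement

section CornerAux

variable {n : ℕ} {R : Type*} [CommRing R] {i j : Fin n}

/-- matrices supported in rows `≤ i` and columns `≥ j`. -/
def Corner (i j : Fin n) (P : Matrix (Fin n) (Fin n) R) : Prop :=
  ∀ a b : Fin n, (i < a ∨ b < j) → P a b = 0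

lemma Corner.sub {P Q : Matrix (Fin n) (Fin n) R} (hP : Corner i j P)
    (hQ : Corner i j Q) : Corner i j (P - Q) := fun a b h => by
  simp [Matrix.sub_apply, hP a b h, hQ a b h]

lemma Corner.mul_corner (hij : i < j) {P Q : Matrix (Fin n) (Fin n) R}
    (hP : Corner i j P) (hQ : Corner i j Q) : P * Q = 0 := by
  ext a b
  rw [Matrix.mul_apply]
  refine Finset.sum_eq_zero fun c _ => ?_
  by_cases hc : c < j
  · rw [hP a c (Or.inr hc), zero_mul]
  · rw [hQ c b (Or.inl (lt_of_lt_of_le hij (not_lt.mp hc))), mul_zero]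

lemma Corner.mul_tri {P Q : Matrix (Fin n) (Fin n) R} (hP : Corner i j P)
    (hQ : Q.BlockTriangular id) : Corner i j (P * Q) := by
  intro a b h
  rw [Matrix.mul_apply]
  refine Finset.sum_eq_zero fun c _ => ?_
  rcases h with h | h
  · rw [hP a c (Or.inl h), zero_mul]
  · by_cases hc : c < j
    · rw [hP a c (Or.inr hc), zero_mul]
    · rw [hQ (show (id b : Fin n) < id c from lt_of_lt_of_le h (not_lt.mp hc)), mul_zero]

lemma Corner.tri_mul {P Q : Matrix (Fin n) (Fin n) R} (hP : Corner i j P)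
    (hQ : Q.BlockTriangular id) : Corner i j (Q * P) := by
  intro a b h
  rw [Matrix.mul_apply]
  refine Finset.sum_eq_zero fun c _ => ?_
  rcases h with h | h
  · by_cases hc : i < c
    · rw [hP c b (Or.inl hc), mul_zero]
    · rw [hQ (show (id c : Fin n) < id a from lt_of_le_of_lt (not_lt.mp hc) h), zero_mul]
  · rw [hP c b (Or.inr h), mul_zero]

/-- key entry computation: `(Q * P * Q') i j = Q i i * P i j * Q' j j`. -/
lemma corner_conj_apply {P Q Q' : Matrix (Fin n) (Fin n) R}
    (hP : Corner i j P) (hQ : Q.BlockTriangular id) (hQ' : Q'.BlockTriangular id) :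
    (Q * P * Q') i j = Q i i * P i j * Q' j j := by
  have h1 : (Q * P) i j = Q i i * P i j := by
    rw [Matrix.mul_apply]
    rw [Finset.sum_eq_single_of_mem i (Finset.mem_univ i)]
    intro c _ hc
    rcases lt_or_gt_of_ne hc with h | h
    · rw [hQ (show (id c : Fin n) < id i from h), zero_mul]
    · rw [hP c j (Or.inl h), mul_zero]
  rw [Matrix.mul_apply, Finset.sum_eq_single_of_mem j (Finset.mem_univ j)]
  · rw [h1]
  · intro c _ hc
    rcases lt_or_gt_of_ne hc with h | h
    · have : Corner i j (Q * P) := hP.tri_mul hQ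
      rw [this i c (Or.inr h), zero_mul]
    · rw [hQ' (show (id j : Fin n) < id c from h), mul_zero]

/-- commutator step: if `u = 1 + P` with `P` a corner matrix, then
`⁅u, g⁆ = 1 + Q` with `Q` corner and `Q i j = P i j * (1 - g i i * g⁻¹ j j)`. -/
lemma comm_step (hij : i < j) (g u : ↥(BorelGL n R))
    {P : Matrix (Fin n) (Fin n) R} (hP : Corner i j P)
    (hu : ((u : GL (Fin n) R) : Matrix (Fin n) (Fin n) R) = 1 + P) :
    ∃ Q : Matrix (Fin n) (Fin n) R, Corner i j Q ∧
      (((⁅u, g⁆ : ↥(BorelGL n R)) : GL (Fin n) R) : Matrix (Fin n) (Fin n) R) = 1 + Q ∧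
      Q i j = P i j * (1 - ((g : GL (Fin n) R) : Matrix (Fin n) (Fin n) R) i i *
        (((g⁻¹ : ↥(BorelGL n R)) : GL (Fin n) R) : Matrix (Fin n) (Fin n) R) j j) := by
  set G : Matrix (Fin n) (Fin n) R := ((g : GL (Fin n) R) : Matrix (Fin n) (Fin n) R) with hG
  set G' : Matrix (Fin n) (Fin n) R :=
    (((g⁻¹ : ↥(BorelGL n R)) : GL (Fin n) R) : Matrix (Fin n) (Fin n) R) with hG'
  have hGt : G.BlockTriangular id := g.2
  have hG't : G'.BlockTriangular id := (g⁻¹).2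
  have hPP : P * P = 0 := hP.mul_corner hij hP
  have huinv : (((u⁻¹ : ↥(BorelGL n R)) : GL (Fin n) R) : Matrix (Fin n) (Fin n) R) = 1 - P := by
    have h2 : (1 - P) * (1 + P) = 1 := by rw [sub_mul, mul_add, mul_add, hPP]; noncomm_ring
    calc (((u⁻¹ : ↥(BorelGL n R)) : GL (Fin n) R) : Matrix (Fin n) (Fin n) R)
        = ((1 - P) * (1 + P)) * (((u⁻¹ : ↥(BorelGL n R)) : GL (Fin n) R) : Matrix (Fin n) (Fin n) R) := by
          rw [h2, one_mul]
      _ = (1 - P) * (((u : GL (Fin n) R) : Matrix (Fin n) (Fin n) R) *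
            (((u⁻¹ : ↥(BorelGL n R)) : GL (Fin n) R) : Matrix (Fin n) (Fin n) R)) := by
          rw [← hu, mul_assoc]
      _ = 1 - P := by rw [coe_mul_coe_inv, mul_one]
  refine ⟨P - G * P * G', hP.sub ((hP.tri_mul hGt).mul_tri hG't), ?_, ?_⟩
  · have hexp : (((⁅u, g⁆ : ↥(BorelGL n R)) : GL (Fin n) R) : Matrix (Fin n) (Fin n) R) =
        ((1 + P) * G) * ((1 - P) * G') := by
      rw [commutatorElement_def, coe_coe_mul, coe_coe_mul, coe_coe_mul, hu, huinv, mul_assoc]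
    have h0 : (P * G) * P = 0 := Corner.mul_corner hij (hP.mul_tri hGt) hP
    have hGG' : G * G' = 1 := coe_mul_coe_inv g
    calc (((⁅u, g⁆ : ↥(BorelGL n R)) : GL (Fin n) R) : Matrix (Fin n) (Fin n) R)
        = ((1 + P) * G) * ((1 - P) * G') := hexp
      _ = G * G' + P * (G * G') - G * P * G' - ((P * G) * P) * G' := by noncomm_ring
      _ = 1 + (P - G * P * G') := by rw [h0, hGG']; noncomm_ring
  · rw [Matrix.sub_apply, corner_conj_apply hP hGt hG't]; ring

end CornerAux

section MainAux

variable {n : ℕ} {R : Type*} [CommRing R]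

instance UB_normal : (UB n R).Normal := by
  constructor
  intro x hx g
  show ((g * x * g⁻¹ : ↥(BorelGL n R)) : GL (Fin n) R) ∈ Unitri n R
  have : ((g * x * g⁻¹ : ↥(BorelGL n R)) : GL (Fin n) R) =
      (g : GL (Fin n) R) * (x : GL (Fin n) R) * (g : GL (Fin n) R)⁻¹ := by
    push_cast
    ring_nf
  rw [this]
  exact unitri_conj_mem g.2 hx

lemma UB_nilpotent : Group.IsNilpotent ↥(UB n R) := by
  have hle : Unitri n R ≤ BorelGL n R := fun x hx => hx.1
  have e : ↥(UB n R) ≃* ↥(Unitri n R) := Subgroup.subgroupOfEquivOfLe hle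
  haveI : Group.IsNilpotent ↥(Unitri n R) := unitri_nilpotent
  exact nilpotent_of_surjective e.symm.toMonoidHom e.symm.surjective

/-- the transvection `1 + E i j` as an element of `B_n(R)`. -/
def tvB (i j : Fin n) (hij : i < j) : ↥(BorelGL n R) :=
  ⟨⟨Matrix.transvection i j (1 : R), Matrix.transvection i j (-1 : R),
    by rw [Matrix.transvection_mul_transvection_same _ _ hij.ne]; simp [Matrix.transvection_zero],
    by rw [Matrix.transvection_mul_transvection_same _ _ hij.ne]; simp [Matrix.transvection_zero]⟩,
    by
      show Matrix.BlockTriangular _ id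
      intro a b hab
      show (1 + Matrix.single i j (1 : R)) a b = 0
      rw [Matrix.add_apply,
        Matrix.one_apply_ne (show a ≠ b from fun h => absurd hab (by simp [h])),
        Matrix.single_apply_of_ne, add_zero]
      rintro ⟨rfl, rfl⟩
      exact absurd hij (not_lt.mpr hab.le)⟩

lemma tvB_coe (i j : Fin n) (hij : i < j) :
    (((tvB i j hij : ↥(BorelGL n R)) : GL (Fin n) R) : Matrix (Fin n) (Fin n) R) =
      1 + Matrix.single i j (1 : R) := rfl

lemma corner_stdBasis (i j : Fin n) : Corner i j (Matrix.single i j (1 : R)) := by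
  intro a b h
  apply Matrix.single_apply_of_ne
  rintro ⟨rfl, rfl⟩
  rcases h with h | h
  · exact lt_irrefl _ h
  · exact lt_irrefl _ h

lemma commutator_mem_of_normal_left {G : Type*} [Group G] {M : Subgroup G} (hM : M.Normal)
    {m : G} (hm : m ∈ M) (x : G) : ⁅m, x⁆ ∈ M := by
  have h := hM.conj_mem m⁻¹ (inv_mem hm) x
  have : ⁅m, x⁆ = m * (x * m⁻¹ * x⁻¹) := by group
  rw [this]
  exact M.mul_mem hm h

/-- the central contradiction: a normal nilpotent subgroup of `PB n R` cannot contain the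
class of a triangular matrix with two distinct diagonal entries. -/
lemma no_distinct_diag [IsDomain R] {M : Subgroup (PB n R)} (hMn : M.Normal)
    (hnil : Group.IsNilpotent ↥M) (g : ↥(BorelGL n R))
    (hg : QuotientGroup.mk' (ZB n R) g ∈ M) {i j : Fin n} (hij : i < j)
    (hne : ((g : GL (Fin n) R) : Matrix (Fin n) (Fin n) R) i i ≠
      ((g : GL (Fin n) R) : Matrix (Fin n) (Fin n) R) j j) : False := by
  set G : Matrix (Fin n) (Fin n) R := ((g : GL (Fin n) R) : Matrix (Fin n) (Fin n) R) with hG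
  set G' : Matrix (Fin n) (Fin n) R :=
    (((g⁻¹ : ↥(BorelGL n R)) : GL (Fin n) R) : Matrix (Fin n) (Fin n) R) with hG'
  set q : R := 1 - G i i * G' j j with hq
  -- q ≠ 0
  have hjj : G j j * G' j j = 1 := by
    have h1 := diag_mul_of_blockTriangular g.2 (g⁻¹).2 j
    rw [coe_mul_coe_inv] at h1
    rw [← h1, Matrix.one_apply_eq]
  have hqne : q ≠ 0 := by
    intro h0
    have h0' : 1 - G i i * G' j j = 0 := h0
    have h1 : G i i * G' j j = 1 := (sub_eq_zero.mp h0').symm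
    have h2 : (G i i - G j j) * G' j j = 0 := by
      rw [sub_mul, h1, hjj, sub_self]
    rcases mul_eq_zero.mp h2 with h | h
    · exact hne (sub_eq_zero.mp h)
    · rw [h, mul_zero] at hjj
      exact one_ne_zero hjj.symm
  -- the sequence of iterated commutators
  let c : ℕ → ↥(BorelGL n R) := fun k => Nat.rec (motive := fun _ => ↥(BorelGL n R)) ⁅(tvB i j hij : ↥(BorelGL n R)), g⁆ (fun _ x => ⁅x, g⁆) k
  have hc0 : c 0 = ⁅(tvB i j hij : ↥(BorelGL n R)), g⁆ := rfl
  have hcs : ∀ k, c (k + 1) = ⁅c k, g⁆ := fun k => rfl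
  -- matrix shape of c k
  have hshape : ∀ k, ∃ P : Matrix (Fin n) (Fin n) R, Corner i j P ∧
      (((c k : ↥(BorelGL n R)) : GL (Fin n) R) : Matrix (Fin n) (Fin n) R) = 1 + P ∧
      P i j = q ^ (k + 1) := by
    intro k
    induction k with
    | zero =>
      obtain ⟨Q, hQc, hQm, hQe⟩ := comm_step hij g (tvB i j hij)
        (corner_stdBasis i j) (tvB_coe i j hij)
      exact ⟨Q, hQc, hQm, by
        rw [hQe, Matrix.single_apply_same, one_mul, pow_one]⟩
    | succ k ih =>
      obtain ⟨P, hPc, hPm, hPe⟩ := ih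
      obtain ⟨Q, hQc, hQm, hQe⟩ := comm_step hij g (c k) hPc hPm
      refine ⟨Q, hQc, by rw [hcs k]; exact hQm, ?_⟩
      rw [hQe, hPe, ← hq]; ring
  -- membership in M
  have hmem : ∀ k, QuotientGroup.mk' (ZB n R) (c k) ∈ M := by
    intro k
    induction k with
    | zero =>
      rw [hc0, map_commutatorElement]
      have : ⁅QuotientGroup.mk' (ZB n R) (tvB i j hij), QuotientGroup.mk' (ZB n R) g⁆ =
          ((QuotientGroup.mk' (ZB n R) (tvB i j hij)) * (QuotientGroup.mk' (ZB n R) g) *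
            (QuotientGroup.mk' (ZB n R) (tvB i j hij))⁻¹) * (QuotientGroup.mk' (ZB n R) g)⁻¹ := by
        group
      rw [this]
      exact M.mul_mem (hMn.conj_mem _ hg _) (M.inv_mem hg)
    | succ k ih =>
      rw [hcs k, map_commutatorElement]
      exact commutator_mem_of_normal_left hMn ih _
  -- membership in the lower central series
  have hγ : ∀ k, (⟨QuotientGroup.mk' (ZB n R) (c k), hmem k⟩ : ↥M) ∈
      Subgroup.lowerCentralSeries (⊤ : Subgroup ↥M) k := by
    intro k
    induction k with
    | zero => exact Subgroup.mem_top _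
    | succ k ih =>
      rw [Subgroup.lowerCentralSeries_succ]
      have heq : (⟨QuotientGroup.mk' (ZB n R) (c (k+1)), hmem (k+1)⟩ : ↥M) =
          ⁅(⟨QuotientGroup.mk' (ZB n R) (c k), hmem k⟩ : ↥M), (⟨QuotientGroup.mk' (ZB n R) g, hg⟩ : ↥M)⁆ := by
        apply Subtype.ext
        show QuotientGroup.mk' (ZB n R) (c (k+1)) = _
        rw [hcs k, map_commutatorElement]
        rfl
      rw [heq]
      exact Subgroup.commutator_mem_commutator ih (Subgroup.mem_top _)
  -- nilpotency gives a bound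
  obtain ⟨K, hK⟩ := nilpotent_iff_lowerCentralSeries.mp hnil
  have h1 : (⟨QuotientGroup.mk' (ZB n R) (c K), hmem K⟩ : ↥M) = 1 := by
    have := hγ K
    rw [hK, Subgroup.mem_bot] at this
    exact this
  have h2 : QuotientGroup.mk' (ZB n R) (c K) = 1 := congrArg Subtype.val h1
  have h3 : c K ∈ ZB n R := (QuotientGroup.eq_one_iff _).mp h2
  obtain ⟨u, hu⟩ := h3
  obtain ⟨P, hPc, hPm, hPe⟩ := hshape K
  have hval : Matrix.scalar (Fin n) (u : R) =
      (((c K : ↥(BorelGL n R)) : GL (Fin n) R) : Matrix (Fin n) (Fin n) R) := by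
    have := congrArg Units.val hu
    simpa using this
  have hij' : i ≠ j := hij.ne
  have hzero : (((c K : ↥(BorelGL n R)) : GL (Fin n) R) : Matrix (Fin n) (Fin n) R) i j = 0 := by
    rw [← hval, Matrix.scalar_apply, Matrix.diagonal_apply_ne _ hij']
  rw [hPm, Matrix.add_apply, Matrix.one_apply_ne hij', hPe, zero_add] at hzero
  exact hqne (pow_eq_zero_iff (by omega) |>.mp hzero)

end MainAux

lemma mem_image_of_diag_eq {n : ℕ} {R : Type*} [CommRing R] (hn : 0 < n)
    (g : ↥(BorelGL n R))
    (hd : ∀ a b : Fin n, ((g : GL (Fin n) R) : Matrix (Fin n) (Fin n) R) a a =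
      ((g : GL (Fin n) R) : Matrix (Fin n) (Fin n) R) b b) :
    QuotientGroup.mk' (ZB n R) g ∈
      Subgroup.map (QuotientGroup.mk' (ZB n R)) (UB n R) := by
  set G : Matrix (Fin n) (Fin n) R := ((g : GL (Fin n) R) : Matrix (Fin n) (Fin n) R) with hG
  set G' : Matrix (Fin n) (Fin n) R :=
    (((g⁻¹ : ↥(BorelGL n R)) : GL (Fin n) R) : Matrix (Fin n) (Fin n) R) with hG'
  set i₀ : Fin n := ⟨0, hn⟩
  have hdd' : G i₀ i₀ * G' i₀ i₀ = 1 := by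
    have h1 := diag_mul_of_blockTriangular g.2 (g⁻¹).2 i₀
    rw [coe_mul_coe_inv] at h1
    rw [← h1, Matrix.one_apply_eq]
  have hd'd : G' i₀ i₀ * G i₀ i₀ = 1 := by rw [mul_comm]; exact hdd'
  set du : Rˣ := ⟨G i₀ i₀, G' i₀ i₀, hdd', hd'd⟩ with hdu
  set z : GL (Fin n) R :=
    Units.map (Matrix.scalar (Fin n) : R →+* Matrix (Fin n) (Fin n) R).toMonoidHom du with hz
  have hzval : (z : Matrix (Fin n) (Fin n) R) = Matrix.scalar (Fin n) (G i₀ i₀) := rfl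
  have hzmem : z ∈ BorelGL n R := by
    show Matrix.BlockTriangular _ id
    intro a b hab
    rw [hzval, Matrix.scalar_apply, Matrix.diagonal_apply_ne _ (fun h => by simp [h] at hab)]
  set zB : ↥(BorelGL n R) := ⟨z, hzmem⟩ with hzB
  have hzZB : zB ∈ ZB n R := ⟨du, rfl⟩
  set u : ↥(BorelGL n R) := zB⁻¹ * g with hu
  have hzinv : (((zB⁻¹ : ↥(BorelGL n R)) : GL (Fin n) R) : Matrix (Fin n) (Fin n) R) =
      Matrix.scalar (Fin n) (G' i₀ i₀) := by
    have : ((zB⁻¹ : ↥(BorelGL n R)) : GL (Fin n) R) = z⁻¹ := rfl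
    rw [this, hz]
    rfl
  have humem : u ∈ UB n R := by
    show ((u : ↥(BorelGL n R)) : GL (Fin n) R) ∈ Unitri n R
    have hmat : ((u : GL (Fin n) R) : Matrix (Fin n) (Fin n) R) =
        Matrix.scalar (Fin n) (G' i₀ i₀) * G := by
      rw [hu, coe_coe_mul, hzinv]
    constructor
    · show Matrix.BlockTriangular _ id
      intro a b hab
      rw [hmat, Matrix.scalar_apply, Matrix.diagonal_mul]
      rw [show G a b = 0 from g.2 hab, mul_zero]
    · intro a
      rw [hmat, Matrix.scalar_apply, Matrix.diagonal_mul, show G a a = G i₀ i₀ from hd a i₀]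
      exact hd'd
  refine ⟨u, humem, ?_⟩
  have hgzu : g = zB * u := by rw [hu, ← mul_assoc, mul_inv_cancel, one_mul]
  have hzq : QuotientGroup.mk' (ZB n R) zB = 1 := (QuotientGroup.eq_one_iff _).mpr hzZB
  calc QuotientGroup.mk' (ZB n R) u
      = QuotientGroup.mk' (ZB n R) zB * QuotientGroup.mk' (ZB n R) u := by rw [hzq, one_mul]
    _ = QuotientGroup.mk' (ZB n R) (zB * u) := (_root_.map_mul _ _ _).symm
    _ = QuotientGroup.mk' (ZB n R) g := by rw [← hgzu]

/-- Over an integral domain with at least two units, the image of `U_n(R)`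
in `PB_n(R)` is the unique maximal normal nilpotent subgroup of `PB_n(R)`; in particular it
is invariant under every automorphism. -/
theorem statement_1 (R : Type*) [CommRing R] [IsDomain R] [Nontrivial Rˣ]
    (n : ℕ) (hn : 2 ≤ n) :
    (Subgroup.map (QuotientGroup.mk' (ZB n R)) (UB n R)).Normal ∧
    Group.IsNilpotent ↥(Subgroup.map (QuotientGroup.mk' (ZB n R)) (UB n R)) ∧
    (∀ M : Subgroup (PB n R), M.Normal → Group.IsNilpotent ↥M →
      M ≤ Subgroup.map (QuotientGroup.mk' (ZB n R)) (UB n R)) ∧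
    (∀ ψ : PB n R ≃* PB n R,
      Subgroup.map ψ.toMonoidHom (Subgroup.map (QuotientGroup.mk' (ZB n R)) (UB n R)) =
        Subgroup.map (QuotientGroup.mk' (ZB n R)) (UB n R)) := by
  set Ubar := Subgroup.map (QuotientGroup.mk' (ZB n R)) (UB n R) with hUbar
  have hnormal : Ubar.Normal :=
    Subgroup.Normal.map UB_normal _ (QuotientGroup.mk'_surjective _)
  have hnilp : Group.IsNilpotent ↥Ubar := by
    haveI : Group.IsNilpotent ↥(UB n R) := UB_nilpotent
    exact nilpotent_of_surjective ((QuotientGroup.mk' (ZB n R)).subgroupMap (UB n R))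
      (MonoidHom.subgroupMap_surjective _ _)
  have hmax : ∀ M : Subgroup (PB n R), M.Normal → Group.IsNilpotent ↥M → M ≤ Ubar := by
    intro M hMn hMnil m hm
    obtain ⟨g, rfl⟩ := QuotientGroup.mk'_surjective (ZB n R) m
    apply mem_image_of_diag_eq (by omega) g
    intro a b
    by_contra hne
    rcases lt_trichotomy a b with h | h | h
    · exact no_distinct_diag hMn hMnil g hm h hne
    · exact hne (h ▸ rfl)
    · exact no_distinct_diag hMn hMnil g hm h (Ne.symm hne)
  refine ⟨hnormal, hnilp, hmax, ?_⟩
  intro ψ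
  have haut : ∀ φ : PB n R ≃* PB n R, Subgroup.map φ.toMonoidHom Ubar ≤ Ubar := by
    intro φ
    apply hmax
    · exact Subgroup.Normal.map hnormal φ.toMonoidHom φ.surjective
    · exact nilpotent_of_surjective (φ.toMonoidHom.subgroupMap Ubar)
        (MonoidHom.subgroupMap_surjective _ _)
  refine le_antisymm (haut ψ) ?_
  have h1 := Subgroup.map_mono (f := ψ.toMonoidHom) (haut ψ.symm)
  rw [Subgroup.map_map] at h1
  have h2 : ψ.toMonoidHom.comp ψ.symm.toMonoidHom = MonoidHom.id _ := by
    ext x; simp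
  rw [h2, Subgroup.map_id] at h1
  exact h1
end

section
/- Let R be a commutative ring with unity and n ≥ 2, and suppose there exists a unit u ∈ R^× such that u − 1 is also a unit of R. Then the commutator subgroup of B_n(R) equals U_n(R). -/
open Matrix

section Statement2Aux

open Matrix

open scoped commutatorElement

variable {n : ℕ} {R : Type*} [CommRing R]

/-- The transvection as a unit of the matrix ring. -/
def tvGL (i j : Fin n) (hij : i ≠ j) (c : R) : GL (Fin n) R where
  val := transvection i j c
  inv := transvection i j (-c)
  val_inv := by rw [transvection_mul_transvection_same _ _ hij, add_neg_cancel, transvection_zero]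
  inv_val := by rw [transvection_mul_transvection_same _ _ hij, neg_add_cancel, transvection_zero]

@[simp] lemma tvGL_val (i j : Fin n) (hij : i ≠ j) (c : R) :
    ((tvGL i j hij c : GL (Fin n) R) : Matrix (Fin n) (Fin n) R) = transvection i j c := rfl

lemma tvGL_neg_mul (i j : Fin n) (hij : i ≠ j) (c : R) :
    tvGL i j hij (-c) * tvGL i j hij c = 1 := by
  ext1
  show transvection i j (-c) * transvection i j c = 1
  rw [transvection_mul_transvection_same _ _ hij, neg_add_cancel, transvection_zero]

/-- Diagonal unit with `u` at position `i` and `1` elsewhere. -/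
def dGL (i : Fin n) (u : Rˣ) : GL (Fin n) R where
  val := diagonal (fun k => if k = i then (u : R) else 1)
  inv := diagonal (fun k => if k = i then ((u⁻¹ : Rˣ) : R) else 1)
  val_inv := by
    rw [diagonal_mul_diagonal]
    have : (fun k : Fin n => (if k = i then (u : R) else 1) *
        (if k = i then ((u⁻¹ : Rˣ) : R) else 1)) = fun _ => 1 := by
      funext k; split_ifs <;> simp
    rw [this, diagonal_one]
  inv_val := by
    rw [diagonal_mul_diagonal]
    have : (fun k : Fin n => (if k = i then ((u⁻¹ : Rˣ) : R) else 1) *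
        (if k = i then (u : R) else 1)) = fun _ => 1 := by
      funext k; split_ifs <;> simp
    rw [this, diagonal_one]

lemma diagonal_mul_transvection_mul_diagonal (i j : Fin n) (hij : i ≠ j) (c : R)
    (δ δ' : Fin n → R) (h : ∀ k, δ k * δ' k = 1) :
    diagonal δ * transvection i j c * diagonal δ' = transvection i j (δ i * c * δ' j) := by
  ext a b
  rw [mul_diagonal, diagonal_mul]
  by_cases hab : a = b
  · subst hab
    have hne : ¬ (i = a ∧ j = a) := fun ⟨h1, h2⟩ => hij (h1.trans h2.symm)
    simp [transvection, Matrix.single, hne, one_apply, h a]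
  · by_cases hij2 : i = a ∧ j = b
    · obtain ⟨rfl, rfl⟩ := hij2
      simp [transvection, one_apply, hab, Matrix.single]
    · simp [transvection, one_apply, hab, Matrix.single, hij2]

lemma transvection_blockTriangular {i j : Fin n} (hij : i < j) (c : R) :
    (transvection i j c).BlockTriangular id := by
  intro a b hba
  have hne : ¬ (i = a ∧ j = b) := by
    rintro ⟨rfl, rfl⟩; exact absurd hij (not_lt.2 hba.le)
  simp only [transvection, Matrix.add_apply, one_apply, Matrix.single, of_apply]
  have hba' : b < a := hba
  have hab : ¬ a = b := (ne_of_lt hba').symm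
  rw [if_neg hab, if_neg hne, add_zero]

lemma tvGL_mem_Borel {i j : Fin n} (hij : i < j) (c : R) :
    tvGL i j hij.ne c ∈ BorelGL n R :=
  transvection_blockTriangular hij c

lemma tvGL_mem_Unitri {i j : Fin n} (hij : i < j) (c : R) :
    tvGL i j hij.ne c ∈ Unitri n R := by
  refine ⟨transvection_blockTriangular hij c, fun a => ?_⟩
  have hne : ¬ (i = a ∧ j = a) := fun ⟨h1, h2⟩ => hij.ne (h1.trans h2.symm)
  show transvection i j c a a = 1
  simp [transvection, one_apply, Matrix.single, hne]

lemma dGL_mem_Borel (i : Fin n) (u : Rˣ) : dGL i u ∈ BorelGL n R :=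
  blockTriangular_diagonal _

lemma diag_inv_blockTriangular {a : GL (Fin n) R}
    (ha : Matrix.BlockTriangular (a : Matrix (Fin n) (Fin n) R) id) :
    Matrix.BlockTriangular ((a⁻¹ : GL (Fin n) R) : Matrix (Fin n) (Fin n) R) id := by
  have : Invertible ((a : Matrix (Fin n) (Fin n) R)) := a.invertible
  simpa [Matrix.coe_units_inv] using Matrix.blockTriangular_inv_of_blockTriangular ha

lemma diag_mul_inv_diag {a : GL (Fin n) R}
    (ha : Matrix.BlockTriangular (a : Matrix (Fin n) (Fin n) R) id) (i : Fin n) :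
    (a : Matrix (Fin n) (Fin n) R) i i *
      ((a⁻¹ : GL (Fin n) R) : Matrix (Fin n) (Fin n) R) i i = 1 := by
  have h1 : ((a : Matrix (Fin n) (Fin n) R) *
      ((a⁻¹ : GL (Fin n) R) : Matrix (Fin n) (Fin n) R)) = 1 := by
    rw [← Units.val_mul, mul_inv_cancel, Units.val_one]
  have := diag_mul_of_blockTriangular ha (diag_inv_blockTriangular ha) i
  rw [h1, Matrix.one_apply_eq] at this
  exact this.symm

/-- The commutator of two upper-triangular invertible matrices is unitriangular. -/
lemma commutator_mem_unitri {a b : GL (Fin n) R}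
    (ha : Matrix.BlockTriangular (a : Matrix (Fin n) (Fin n) R) id)
    (hb : Matrix.BlockTriangular (b : Matrix (Fin n) (Fin n) R) id) :
    a * b * a⁻¹ * b⁻¹ ∈ Unitri n R := by
  have hai := diag_inv_blockTriangular ha
  have hbi := diag_inv_blockTriangular hb
  have habt : Matrix.BlockTriangular
      ((a * b * a⁻¹ * b⁻¹ : GL (Fin n) R) : Matrix (Fin n) (Fin n) R) id := by
    simpa [Units.val_mul] using ((ha.mul hb).mul hai).mul hbi
  refine ⟨habt, fun i => ?_⟩
  have e : ((a * b * a⁻¹ * b⁻¹ : GL (Fin n) R) : Matrix (Fin n) (Fin n) R) =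
      ((a : Matrix (Fin n) (Fin n) R) * (b : Matrix (Fin n) (Fin n) R) *
        ((a⁻¹ : GL (Fin n) R) : Matrix (Fin n) (Fin n) R)) *
        ((b⁻¹ : GL (Fin n) R) : Matrix (Fin n) (Fin n) R) := by
    simp [Units.val_mul]
  rw [e, diag_mul_of_blockTriangular ((ha.mul hb).mul hai) hbi i,
    diag_mul_of_blockTriangular (ha.mul hb) hai i,
    diag_mul_of_blockTriangular ha hb i]
  have key : (a : Matrix (Fin n) (Fin n) R) i i * (b : Matrix (Fin n) (Fin n) R) i i *
      ((a⁻¹ : GL (Fin n) R) : Matrix (Fin n) (Fin n) R) i i *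
      ((b⁻¹ : GL (Fin n) R) : Matrix (Fin n) (Fin n) R) i i =
      ((a : Matrix (Fin n) (Fin n) R) i i *
        ((a⁻¹ : GL (Fin n) R) : Matrix (Fin n) (Fin n) R) i i) *
      ((b : Matrix (Fin n) (Fin n) R) i i *
        ((b⁻¹ : GL (Fin n) R) : Matrix (Fin n) (Fin n) R) i i) := by ring
  rw [key, diag_mul_inv_diag ha i, diag_mul_inv_diag hb i, one_mul]

/-- Commuting a one-parameter diagonal against a transvection. -/
lemma dGL_commutator_tvGL (i j : Fin n) (hij : i ≠ j) (u : Rˣ) (s : R) :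
    ⁅dGL i u, tvGL i j hij s⁆ = tvGL i j hij ((u : R) * s + -s) := by
  ext1
  show diagonal (fun k => if k = i then (u : R) else 1) * transvection i j s *
      diagonal (fun k => if k = i then ((u⁻¹ : Rˣ) : R) else 1) * transvection i j (-s) =
      transvection i j ((u : R) * s + -s)
  rw [diagonal_mul_transvection_mul_diagonal i j hij s _ _
      (fun k => by split_ifs <;> simp),
    if_pos rfl, if_neg hij.symm, mul_one,
    transvection_mul_transvection_same _ _ hij]

/-- Every unitriangular matrix lies in any subgroup containing all upper transvections. -/
lemma unitri_le_of_transvections (K : Subgroup (GL (Fin n) R))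
    (htv : ∀ (i j : Fin n) (hij : i < j) (c : R), tvGL i j hij.ne c ∈ K) :
    ∀ x ∈ Unitri n R, x ∈ K := by
  classical
  suffices h : ∀ t : ℕ, ∀ x ∈ Unitri n R,
      (∀ a b : Fin n, a < b → (b : ℕ) < (a : ℕ) + (n - t) →
        (x : Matrix (Fin n) (Fin n) R) a b = 0) → x ∈ K by
    intro x hx
    refine h n x hx fun a b hab hb => absurd hb (by omega)
  intro t
  induction t with
  | zero =>
    intro x hx hz
    have hx1 : x = 1 := by
      ext1
      rw [Units.val_one]
      ext a b
      rcases lt_trichotomy a b with hab | hab | hab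
      · rw [hz a b hab (by omega), Matrix.one_apply_ne (ne_of_lt hab)]
      · subst hab; rw [hx.2 a, Matrix.one_apply_eq]
      · rw [hx.1 hab, Matrix.one_apply_ne (ne_of_lt hab).symm]
    rw [hx1]; exact one_mem K
  | succ t ih =>
    intro x hx hz
    by_cases htn : n ≤ t
    · exact ih x hx (fun a b hab hb => hz a b hab (by omega))
    have hk1 : n - t = (n - (t + 1)) + 1 := by omega
    set k := n - (t + 1) with hk
    -- inner induction on the number of nonzero entries on the k-th superdiagonal
    have inner : ∀ c : ℕ, ∀ x : GL (Fin n) R, x ∈ Unitri n R →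
        (∀ a b : Fin n, a < b → (b : ℕ) < (a : ℕ) + k →
          (x : Matrix (Fin n) (Fin n) R) a b = 0) →
        (Finset.univ.filter (fun i : Fin n => ∃ j : Fin n,
          (j : ℕ) = (i : ℕ) + k ∧ i < j ∧ (x : Matrix (Fin n) (Fin n) R) i j ≠ 0)).card ≤ c →
        x ∈ K := by
      intro c
      induction c with
      | zero =>
        intro x hx hzk hcard
        refine ih x hx fun a b hab hb => ?_
        rcases Nat.lt_or_ge (b : ℕ) ((a : ℕ) + k) with hlt | hge
        · exact hzk a b hab hlt
        · have hbk : (b : ℕ) = (a : ℕ) + k := by omega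
          by_contra hne
          have : a ∈ Finset.univ.filter (fun i : Fin n => ∃ j : Fin n,
              (j : ℕ) = (i : ℕ) + k ∧ i < j ∧ (x : Matrix (Fin n) (Fin n) R) i j ≠ 0) :=
            Finset.mem_filter.2 ⟨Finset.mem_univ a, b, hbk, hab, hne⟩
          have := Finset.card_pos.2 ⟨a, this⟩
          omega
      | succ c ihc =>
        intro x hx hzk hcard
        rcases Nat.lt_or_ge c (Finset.univ.filter (fun i : Fin n => ∃ j : Fin n,
            (j : ℕ) = (i : ℕ) + k ∧ i < j ∧
            (x : Matrix (Fin n) (Fin n) R) i j ≠ 0)).card with hlt | hle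
        swap
        · exact ihc x hx hzk hle
        have hne : (Finset.univ.filter (fun i : Fin n => ∃ j : Fin n,
            (j : ℕ) = (i : ℕ) + k ∧ i < j ∧
            (x : Matrix (Fin n) (Fin n) R) i j ≠ 0)).Nonempty :=
          Finset.card_pos.1 (by omega)
        obtain ⟨i, hiS⟩ := hne
        obtain ⟨-, j, hjk, hij, hne0⟩ := Finset.mem_filter.1 hiS
        set c0 : R := (x : Matrix (Fin n) (Fin n) R) i j with hc0
        set x' : GL (Fin n) R := x * tvGL i j hij.ne (-c0) with hx'
        have hx'val : (x' : Matrix (Fin n) (Fin n) R) =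
            (x : Matrix (Fin n) (Fin n) R) * transvection i j (-c0) := rfl
        have hx'U : x' ∈ Unitri n R := mul_mem hx (tvGL_mem_Unitri hij (-c0))
        -- entries of x'
        have hentry_ne : ∀ a b : Fin n, b ≠ j →
            (x' : Matrix (Fin n) (Fin n) R) a b = (x : Matrix (Fin n) (Fin n) R) a b := by
          intro a b hbj
          rw [hx'val, mul_transvection_apply_of_ne _ _ _ _ hbj]
        have hentry_j : ∀ a : Fin n,
            (x' : Matrix (Fin n) (Fin n) R) a j = (x : Matrix (Fin n) (Fin n) R) a j +
              (-c0) * (x : Matrix (Fin n) (Fin n) R) a i := by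
          intro a
          rw [hx'val, mul_transvection_apply_same]
        have hzk' : ∀ a b : Fin n, a < b → (b : ℕ) < (a : ℕ) + k →
            (x' : Matrix (Fin n) (Fin n) R) a b = 0 := by
          intro a b hab hb
          by_cases hbj : b = j
          · subst hbj
            have hia : i < a := by
              have : (i : ℕ) < (a : ℕ) := by omega
              exact this
            rw [hentry_j a, hzk a b hab hb, hx.1 hia, mul_zero, add_zero]
          · rw [hentry_ne a b hbj]; exact hzk a b hab hb
        have hsub : (Finset.univ.filter (fun i' : Fin n => ∃ j' : Fin n,
            (j' : ℕ) = (i' : ℕ) + k ∧ i' < j' ∧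
            (x' : Matrix (Fin n) (Fin n) R) i' j' ≠ 0)) ⊆
            (Finset.univ.filter (fun i' : Fin n => ∃ j' : Fin n,
            (j' : ℕ) = (i' : ℕ) + k ∧ i' < j' ∧
            (x : Matrix (Fin n) (Fin n) R) i' j' ≠ 0)).erase i := by
          intro i' hi'
          obtain ⟨-, j', hj'k, hi'j', hne'⟩ := Finset.mem_filter.1 hi'
          by_cases hjj : j' = j
          · exfalso
            subst hjj
            have hii : i' = i := Fin.ext (by omega)
            subst hii
            apply hne'
            rw [hentry_j i', hx.2 i', mul_one, ← hc0, add_neg_cancel]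
          · have hii : i' ≠ i := by
              intro hii; subst hii
              exact hjj (Fin.ext (by omega))
            refine Finset.mem_erase.2 ⟨hii, Finset.mem_filter.2
              ⟨Finset.mem_univ _, j', hj'k, hi'j', ?_⟩⟩
            rw [← hentry_ne i' j' hjj]; exact hne'
        have hcard' : (Finset.univ.filter (fun i' : Fin n => ∃ j' : Fin n,
            (j' : ℕ) = (i' : ℕ) + k ∧ i' < j' ∧
            (x' : Matrix (Fin n) (Fin n) R) i' j' ≠ 0)).card ≤ c := by
          have h1 := Finset.card_le_card hsub
          have h2 := Finset.card_erase_of_mem hiS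
          omega
        have hx'K : x' ∈ K := ihc x' hx'U hzk' hcard'
        have hxeq : x = x' * tvGL i j hij.ne c0 := by
          rw [hx', mul_assoc, tvGL_neg_mul, mul_one]
        rw [hxeq]
        exact mul_mem hx'K (htv i j hij c0)
    exact inner (Finset.univ.filter (fun i : Fin n => ∃ j : Fin n,
        (j : ℕ) = (i : ℕ) + k ∧ i < j ∧
        (x : Matrix (Fin n) (Fin n) R) i j ≠ 0)).card x hx
      (fun a b hab hb => hz a b hab (by omega)) le_rfl

end Statement2Aux

open scoped commutatorElement

/-- If some unit `u` of the commutative ring `R` is such that `u - 1` is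
also a unit, then the commutator subgroup of `B_n(R)` equals `U_n(R)` (for `n ≥ 2`). -/
theorem statement_2 (R : Type*) [CommRing R] (n : ℕ) (hn : 2 ≤ n)
    (h : ∃ u : Rˣ, IsUnit ((u : R) - 1)) :
    commutator ↥(BorelGL n R) = UB n R := by
  obtain ⟨u, v, hv⟩ := h
  apply le_antisymm
  · rw [commutator_def, Subgroup.commutator_le]
    intro g _ g' _
    show ((⁅g, g'⁆ : ↥(BorelGL n R)) : GL (Fin n) R) ∈ Unitri n R
    exact commutator_mem_unitri g.2 g'.2
  · intro g hg
    -- K : image of the commutator subgroup in GL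
    set K : Subgroup (GL (Fin n) R) :=
      (commutator ↥(BorelGL n R)).map (BorelGL n R).subtype with hK
    have htv : ∀ (i j : Fin n) (hij : i < j) (c : R), tvGL i j hij.ne c ∈ K := by
      intro i j hij c
      set s : R := ((v⁻¹ : Rˣ) : R) * c with hs
      have hcs : (u : R) * s + -s = c := by
        have h1 : (v : R) * ((v⁻¹ : Rˣ) : R) = 1 := Units.mul_inv v
        calc (u : R) * s + -s = ((u : R) - 1) * s := by ring
          _ = (v : R) * (((v⁻¹ : Rˣ) : R) * c) := by rw [hv, hs]
          _ = c := by rw [← mul_assoc, h1, one_mul]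
      have hcomm : ⁅dGL i u, tvGL i j hij.ne s⁆ = tvGL i j hij.ne c := by
        rw [dGL_commutator_tvGL, hcs]
      rw [← hcomm]
      refine ⟨⁅(⟨dGL i u, dGL_mem_Borel i u⟩ : ↥(BorelGL n R)),
        (⟨tvGL i j hij.ne s, tvGL_mem_Borel hij s⟩ : ↥(BorelGL n R))⁆,
        Subgroup.commutator_mem_commutator (Subgroup.mem_top _) (Subgroup.mem_top _), rfl⟩
    have hgK : (g : GL (Fin n) R) ∈ K := unitri_le_of_transvections K htv _ hg
    obtain ⟨y, hy, hxy⟩ := hgK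
    have : y = g := Subtype.ext hxy
    rwa [this] at hy
end

section
/- Let R be a commutative ring with unity and n ≥ 2, and suppose every element of R can be written as a sum of two units of R. Then the commutator subgroup of B_n(R) equals U_n(R). -/
open Matrix

section Statement3Aux

open Matrix

open scoped commutatorElement

variable {n : ℕ} {R : Type*} [CommRing R]

lemma s3_transvection_bt {i j : Fin n} (hij : i < j) (c : R) :
    (Matrix.transvection i j c).BlockTriangular id := by
  intro k l hlk
  simp only [id_eq] at hlk
  have h1 : ¬(i = k ∧ j = l) := by
    rintro ⟨rfl, rfl⟩; exact absurd hij (not_lt.2 hlk.le)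
  simp [Matrix.transvection, Matrix.add_apply, Matrix.one_apply_ne hlk.ne',
    Matrix.single_apply_of_ne _ _ _ _ _ h1]

lemma s3_transvection_diag {i j : Fin n} (hij : i ≠ j) (c : R) (k : Fin n) :
    Matrix.transvection i j c k k = 1 := by
  have h1 : ¬(i = k ∧ j = k) := by rintro ⟨rfl, rfl⟩; exact hij rfl
  simp [Matrix.transvection, Matrix.add_apply, Matrix.one_apply,
    Matrix.single_apply_of_ne _ _ _ _ _ h1]

/-- Transvection as an element of `GL`. -/
def s3_tGL {i j : Fin n} (hij : i ≠ j) (c : R) : GL (Fin n) R :=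
  ⟨Matrix.transvection i j c, Matrix.transvection i j (-c),
   by rw [Matrix.transvection_mul_transvection_same _ _ hij, add_neg_cancel,
        Matrix.transvection_zero],
   by rw [Matrix.transvection_mul_transvection_same _ _ hij, neg_add_cancel,
        Matrix.transvection_zero]⟩

@[simp] lemma s3_tGL_val {i j : Fin n} (hij : i ≠ j) (c : R) :
    (s3_tGL hij c : Matrix (Fin n) (Fin n) R) = Matrix.transvection i j c := rfl

@[simp] lemma s3_tGL_inv_val {i j : Fin n} (hij : i ≠ j) (c : R) :
    (((s3_tGL hij c)⁻¹ : GL (Fin n) R) : Matrix (Fin n) (Fin n) R) =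
      Matrix.transvection i j (-c) := rfl

lemma s3_tGL_mem {i j : Fin n} (hij : i < j) (c : R) :
    s3_tGL hij.ne c ∈ BorelGL n R := s3_transvection_bt hij c

/-- Invertible diagonal matrix as an element of `GL`. -/
def s3_dGL (d : Fin n → Rˣ) : GL (Fin n) R :=
  ⟨Matrix.diagonal (fun k => (d k : R)), Matrix.diagonal (fun k => (((d k)⁻¹ : Rˣ) : R)),
   by rw [Matrix.diagonal_mul_diagonal]; simp,
   by rw [Matrix.diagonal_mul_diagonal]; simp⟩

@[simp] lemma s3_dGL_val (d : Fin n → Rˣ) :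
    (s3_dGL d : Matrix (Fin n) (Fin n) R) = Matrix.diagonal (fun k => (d k : R)) := rfl

@[simp] lemma s3_dGL_inv_val (d : Fin n → Rˣ) :
    (((s3_dGL d)⁻¹ : GL (Fin n) R) : Matrix (Fin n) (Fin n) R) =
      Matrix.diagonal (fun k => (((d k)⁻¹ : Rˣ) : R)) := rfl

lemma s3_dGL_mem (d : Fin n → Rˣ) : s3_dGL d ∈ BorelGL n R :=
  Matrix.blockTriangular_diagonal _

lemma s3_diag_conj_trans (a b : Fin n → R) (hab : ∀ k, a k * b k = 1)
    {i j : Fin n} (hij : i ≠ j) (c : R) :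
    Matrix.diagonal a * Matrix.transvection i j c * Matrix.diagonal b =
      Matrix.transvection i j (a i * c * b j) := by
  ext k l
  rw [Matrix.mul_diagonal, Matrix.diagonal_mul]
  by_cases hkl : k = i ∧ l = j
  · obtain ⟨rfl, rfl⟩ := hkl
    simp [Matrix.transvection, Matrix.add_apply, Matrix.one_apply_ne hij, mul_assoc]
  · have h2 : ¬(i = k ∧ j = l) := fun ⟨h1, h2⟩ => hkl ⟨h1.symm, h2.symm⟩
    by_cases hkl' : k = l
    · subst hkl'
      simp [Matrix.transvection, Matrix.add_apply, Matrix.one_apply,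
        Matrix.single_apply_of_ne _ _ _ _ _ h2, hab k]
    · simp [Matrix.transvection, Matrix.add_apply, Matrix.one_apply_ne hkl',
        Matrix.single_apply_of_ne _ _ _ _ _ h2]

/-- If `u - 1` is a unit, then every transvection (as element of `B_n(R)`)
lies in the commutator subgroup. -/
lemma s3_trans_mem_commutator {u w : Rˣ} (hw : (u : R) - 1 = (w : R))
    {i j : Fin n} (hij : i < j) (c : R) :
    (⟨s3_tGL hij.ne c, s3_tGL_mem hij c⟩ : ↥(BorelGL n R)) ∈
      commutator ↥(BorelGL n R) := by
  set d : Fin n → Rˣ := fun k => if k = i then u else 1 with hd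
  set s : R := ((w⁻¹ : Rˣ) : R) * c with hs
  have key : s3_dGL d * s3_tGL hij.ne s * (s3_dGL d)⁻¹ * (s3_tGL hij.ne s)⁻¹
      = s3_tGL hij.ne c := by
    apply Units.ext
    simp only [Units.val_mul, s3_dGL_val, s3_dGL_inv_val, s3_tGL_val, s3_tGL_inv_val]
    rw [s3_diag_conj_trans _ _ (fun k => Units.mul_inv _) hij.ne s]
    rw [Matrix.transvection_mul_transvection_same _ _ hij.ne]
    have hdi : d i = u := if_pos rfl
    have hdj : d j = 1 := if_neg hij.ne'
    have h1 : ((u : R) - 1) * (((w⁻¹ : Rˣ) : R) * c) = c := by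
      rw [hw, ← mul_assoc, Units.mul_inv, one_mul]
    have harg : (u : R) * (((w⁻¹ : Rˣ) : R) * c) * (((1 : Rˣ)⁻¹ : Rˣ) : R) +
        -(((w⁻¹ : Rˣ) : R) * c) = c := by
      calc (u : R) * (((w⁻¹ : Rˣ) : R) * c) * (((1 : Rˣ)⁻¹ : Rˣ) : R) + -(((w⁻¹ : Rˣ) : R) * c)
          = ((u : R) - 1) * (((w⁻¹ : Rˣ) : R) * c) := by
            simp only [inv_one, Units.val_one]; ring
        _ = c := h1
    rw [hdi, hdj, hs, harg]
  have hmem : (⟨s3_tGL hij.ne c, s3_tGL_mem hij c⟩ : ↥(BorelGL n R)) =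
      ⁅(⟨s3_dGL d, s3_dGL_mem d⟩ : ↥(BorelGL n R)),
       (⟨s3_tGL hij.ne s, s3_tGL_mem hij s⟩ : ↥(BorelGL n R))⁆ := by
    apply Subtype.ext
    simp only [commutatorElement_def]
    push_cast
    exact key.symm
  rw [hmem, commutator_def]
  exact Subgroup.commutator_mem_commutator (Subgroup.mem_top _) (Subgroup.mem_top _)

/-- Main induction: a unitriangular matrix whose strictly-upper support is contained
in `s` lies in the commutator subgroup. -/
lemma s3_key {u w : Rˣ} (hw : (u : R) - 1 = (w : R)) (s : Finset (Fin n × Fin n)) :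
    ∀ (M : GL (Fin n) R) (hM : M ∈ BorelGL n R),
      (∀ i, (M : Matrix (Fin n) (Fin n) R) i i = 1) →
      (∀ p : Fin n × Fin n, p.1 < p.2 → (M : Matrix (Fin n) (Fin n) R) p.1 p.2 ≠ 0 → p ∈ s) →
      (⟨M, hM⟩ : ↥(BorelGL n R)) ∈ commutator ↥(BorelGL n R) := by
  induction s using Finset.strongInduction with
  | _ s ih =>
    intro M hM hdiag hsupp
    classical
    have hMbt : Matrix.BlockTriangular (M : Matrix (Fin n) (Fin n) R) id := hM
    by_cases hex : ∃ p : Fin n × Fin n, p.1 < p.2 ∧ (M : Matrix (Fin n) (Fin n) R) p.1 p.2 ≠ 0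
    · -- pick an entry with minimal row index
      set t : Finset (Fin n × Fin n) :=
        s.filter (fun p => p.1 < p.2 ∧ (M : Matrix (Fin n) (Fin n) R) p.1 p.2 ≠ 0) with ht
      have htne : t.Nonempty := by
        obtain ⟨p, hp1, hp2⟩ := hex
        exact ⟨p, Finset.mem_filter.2 ⟨hsupp p hp1 hp2, hp1, hp2⟩⟩
      have himg : (t.image Prod.fst).Nonempty := htne.image _
      set i0 := (t.image Prod.fst).min' himg with hi0
      obtain ⟨p, hpt, hpfst⟩ := Finset.mem_image.1 ((t.image Prod.fst).min'_mem himg)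
      obtain ⟨i, j⟩ := p
      simp only at hpfst
      obtain ⟨hps, hij, hMij⟩ := Finset.mem_filter.1 hpt
      -- minimality: entries (k, i) with k < i vanish
      have hmin : ∀ k : Fin n, k < i → (M : Matrix (Fin n) (Fin n) R) k i = 0 := by
        intro k hk
        by_contra hne
        have : (k, i) ∈ t := Finset.mem_filter.2 ⟨hsupp (k, i) hk hne, hk, hne⟩
        have : k ∈ t.image Prod.fst := Finset.mem_image.2 ⟨(k, i), this, rfl⟩
        have := (t.image Prod.fst).min'_le _ this
        rw [← hi0] at this
        rw [hpfst] at hk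
        exact absurd (lt_of_le_of_lt this hk) (lt_irrefl _)
      set m : R := (M : Matrix (Fin n) (Fin n) R) i j with hm
      set T : GL (Fin n) R := s3_tGL hij.ne m with hT
      set M' : GL (Fin n) R := M * T⁻¹ with hM'def
      have hM'val : (M' : Matrix (Fin n) (Fin n) R) =
          (M : Matrix (Fin n) (Fin n) R) * Matrix.transvection i j (-m) := by
        rw [hM'def, Units.val_mul, hT, s3_tGL_inv_val]
      have hM'bt : M' ∈ BorelGL n R := by
        show Matrix.BlockTriangular _ id
        rw [hM'val]
        exact hMbt.mul (s3_transvection_bt hij (-m))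
      have hM'diag : ∀ k, (M' : Matrix (Fin n) (Fin n) R) k k = 1 := by
        intro k
        rw [hM'val, diag_mul_of_blockTriangular hMbt (s3_transvection_bt hij (-m)) k,
          hdiag k, s3_transvection_diag hij.ne, one_mul]
      have hM'supp : ∀ p : Fin n × Fin n, p.1 < p.2 →
          (M' : Matrix (Fin n) (Fin n) R) p.1 p.2 ≠ 0 → p ∈ s.erase (i, j) := by
        rintro ⟨k, l⟩ hkl hne
        rw [hM'val] at hne
        by_cases hlj : l = j
        · subst hlj
          rw [Matrix.mul_transvection_apply_same] at hne
          rcases lt_trichotomy k i with hki | hki | hki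
          · rw [hmin k hki, mul_zero, add_zero] at hne
            refine Finset.mem_erase.2 ⟨fun hq => ?_, hsupp (k, l) hkl hne⟩
            rw [Prod.mk.injEq] at hq
            exact hki.ne hq.1
          · subst hki
            rw [hdiag k, mul_one, ← hm] at hne
            exact absurd (add_neg_cancel m) hne
          · rw [hMbt (show (id i : Fin n) < id k from hki), mul_zero, add_zero] at hne
            refine Finset.mem_erase.2 ⟨fun hq => ?_, hsupp (k, l) hkl hne⟩
            rw [Prod.mk.injEq] at hq
            exact hki.ne' hq.1
        · rw [Matrix.mul_transvection_apply_of_ne _ _ _ _ hlj] at hne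
          refine Finset.mem_erase.2 ⟨fun hq => ?_, hsupp (k, l) hkl hne⟩
          rw [Prod.mk.injEq] at hq
          exact hlj hq.2
      have hss : s.erase (i, j) ⊂ s := Finset.erase_ssubset hps
      have hrec := ih (s.erase (i, j)) hss M' hM'bt hM'diag hM'supp
      have hTmem := s3_trans_mem_commutator hw hij m
      have : (⟨M, hM⟩ : ↥(BorelGL n R)) =
          (⟨M', hM'bt⟩ : ↥(BorelGL n R)) * ⟨T, s3_tGL_mem hij m⟩ := by
        apply Subtype.ext
        show M = M' * T
        rw [hM'def, inv_mul_cancel_right]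
      rw [this]
      exact mul_mem hrec hTmem
    · -- M = 1
      push_neg at hex
      have : (⟨M, hM⟩ : ↥(BorelGL n R)) = 1 := by
        apply Subtype.ext
        apply Units.ext
        ext k l
        rcases lt_trichotomy k l with hkl | hkl | hkl
        · rw [hex (k, l) hkl]
          exact (Matrix.one_apply_ne hkl.ne).symm
        · subst hkl
          rw [hdiag k]
          exact (Matrix.one_apply_eq k).symm
        · rw [hMbt (show (id l : Fin n) < id k from hkl)]
          exact (Matrix.one_apply_ne hkl.ne').symm
      rw [this]
      exact one_mem _

lemma s3_diag_inv_mul {g : GL (Fin n) R}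
    (hg : Matrix.BlockTriangular (g : Matrix (Fin n) (Fin n) R) id) (i : Fin n) :
    (g : Matrix (Fin n) (Fin n) R) i i *
      ((g⁻¹ : GL (Fin n) R) : Matrix (Fin n) (Fin n) R) i i = 1 := by
  have : Invertible ((g : Matrix (Fin n) (Fin n) R)) := g.invertible
  have hginv : Matrix.BlockTriangular ((g⁻¹ : GL (Fin n) R) : Matrix (Fin n) (Fin n) R) id := by
    simpa [Matrix.coe_units_inv] using Matrix.blockTriangular_inv_of_blockTriangular hg
  have h1 : ((g : Matrix (Fin n) (Fin n) R) *
      ((g⁻¹ : GL (Fin n) R) : Matrix (Fin n) (Fin n) R)) = 1 := by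
    rw [← Units.val_mul, mul_inv_cancel, Units.val_one]
  have := diag_mul_of_blockTriangular hg hginv i
  rw [h1, Matrix.one_apply_eq] at this
  exact this.symm

end Statement3Aux

open scoped commutatorElement

/-- If every element of the commutative ring `R` is a sum of two units,
then the commutator subgroup of `B_n(R)` equals `U_n(R)` (for `n ≥ 2`). -/
theorem statement_3 (R : Type*) [CommRing R] (n : ℕ) (hn : 2 ≤ n)
    (h : ∀ r : R, ∃ u v : Rˣ, r = (u : R) + (v : R)) :
    commutator ↥(BorelGL n R) = UB n R := by
  apply le_antisymm
  · rw [commutator_def, Subgroup.commutator_le]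
    intro x _ y _
    show ((⁅x, y⁆ : ↥(BorelGL n R)) : GL (Fin n) R) ∈ Unitri n R
    have hx : Matrix.BlockTriangular ((x : GL (Fin n) R) : Matrix (Fin n) (Fin n) R) id := x.2
    have hy : Matrix.BlockTriangular ((y : GL (Fin n) R) : Matrix (Fin n) (Fin n) R) id := y.2
    have hxi : Invertible (((x : GL (Fin n) R)) : Matrix (Fin n) (Fin n) R) :=
      (x : GL (Fin n) R).invertible
    have hyi : Invertible (((y : GL (Fin n) R)) : Matrix (Fin n) (Fin n) R) :=
      (y : GL (Fin n) R).invertible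
    have hxinv : Matrix.BlockTriangular
        (((x : GL (Fin n) R)⁻¹ : GL (Fin n) R) : Matrix (Fin n) (Fin n) R) id := by
      simpa [Matrix.coe_units_inv] using Matrix.blockTriangular_inv_of_blockTriangular hx
    have hyinv : Matrix.BlockTriangular
        (((y : GL (Fin n) R)⁻¹ : GL (Fin n) R) : Matrix (Fin n) (Fin n) R) id := by
      simpa [Matrix.coe_units_inv] using Matrix.blockTriangular_inv_of_blockTriangular hy
    have hcoe : ((⁅x, y⁆ : ↥(BorelGL n R)) : GL (Fin n) R) =
        (x : GL (Fin n) R) * (y : GL (Fin n) R) * (x : GL (Fin n) R)⁻¹ *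
          (y : GL (Fin n) R)⁻¹ := by
      simp [commutatorElement_def]
    have hval : (((⁅x, y⁆ : ↥(BorelGL n R)) : GL (Fin n) R) : Matrix (Fin n) (Fin n) R) =
        ((x : GL (Fin n) R) : Matrix (Fin n) (Fin n) R) *
          ((y : GL (Fin n) R) : Matrix (Fin n) (Fin n) R) *
          (((x : GL (Fin n) R)⁻¹ : GL (Fin n) R) : Matrix (Fin n) (Fin n) R) *
          (((y : GL (Fin n) R)⁻¹ : GL (Fin n) R) : Matrix (Fin n) (Fin n) R) := by
      rw [hcoe]; simp [Units.val_mul]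
    refine ⟨?_, ?_⟩
    · rw [hval]
      exact ((hx.mul hy).mul hxinv).mul hyinv
    · intro i
      rw [hval,
        diag_mul_of_blockTriangular ((hx.mul hy).mul hxinv) hyinv i,
        diag_mul_of_blockTriangular (hx.mul hy) hxinv i,
        diag_mul_of_blockTriangular hx hy i]
      rw [mul_assoc, mul_assoc, ← mul_assoc
        (((y : GL (Fin n) R) : Matrix (Fin n) (Fin n) R) i i)]
      rw [mul_comm (((y : GL (Fin n) R) : Matrix (Fin n) (Fin n) R) i i)
        ((((x : GL (Fin n) R)⁻¹ : GL (Fin n) R) : Matrix (Fin n) (Fin n) R) i i)]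
      rw [mul_assoc, ← mul_assoc, ← mul_assoc]
      rw [s3_diag_inv_mul hx i, one_mul, s3_diag_inv_mul hy i]
  · intro g hg
    obtain ⟨a, b, hab⟩ := h 1
    have hw : (a : R) - 1 = ((-b : Rˣ) : R) := by
      rw [Units.val_neg, hab]; ring
    have hg' : (g : GL (Fin n) R) ∈ Unitri n R := hg
    exact s3_key hw Finset.univ (g : GL (Fin n) R) g.2 hg'.2 (fun p _ _ => Finset.mem_univ p)
end

section
/- There exists a group automorphism φ of B_2(ℤ[t]) with φ(U_2(ℤ[t])) ≠ U_2(ℤ[t]); explicitly, letting ε : (ℤ[t],+) → {±1} be the group homomorphism sending a polynomial to (−1) raised to the sum of its coefficients, the map sending the matrix with rows (u, r), (0, v) to the scalar matrix ε(r)·1_2 times that matrix is such an automorphism. In particular, U_2(ℤ[t]) is not a characteristic subgroup of B_2(ℤ[t]). -/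
open Matrix

/-- `ε(r) = (-1)^(sum of the coefficients of r)` as a unit of `ℤ[t]`; the sum of the
coefficients of `r` is `r.eval 1`. -/
noncomputable def epsUnit (r : Polynomial ℤ) : (Polynomial ℤ)ˣ :=
  (-1 : (Polynomial ℤ)ˣ) ^ (Polynomial.eval 1 r)


section S6aux

open Matrix Polynomial

local notation "Rp" => Polynomial ℤ

lemma epsUnit_add (a b : Rp) : epsUnit (a + b) = epsUnit a * epsUnit b := by
  unfold epsUnit; rw [Polynomial.eval_add, _root_.zpow_add]

lemma epsUnit_unit_mul {u : Rp} (hu : IsUnit u) (r : Rp) :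
    epsUnit (u * r) = epsUnit r := by
  unfold epsUnit
  rw [Polynomial.eval_mul, _root_.zpow_mul]
  have : IsUnit (Polynomial.eval 1 u) := hu.map (Polynomial.evalRingHom 1)
  rcases Int.isUnit_iff.mp this with h | h <;> rw [h] <;> simp

lemma epsUnit_mul_unit (r : Rp) {u : Rp} (hu : IsUnit u) :
    epsUnit (r * u) = epsUnit r := by rw [mul_comm]; exact epsUnit_unit_mul hu r

lemma epsUnit_sq (r : Rp) : epsUnit r * epsUnit r = 1 := by
  unfold epsUnit; rw [← mul_zpow]; norm_num

lemma epsUnit_one : epsUnit 1 = -1 := by unfold epsUnit; simp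

noncomputable def zmap : Rpˣ →* GL (Fin 2) Rp :=
  Units.map (Matrix.scalar (Fin 2) : Rp →+* Matrix (Fin 2) (Fin 2) Rp).toMonoidHom

lemma zmap_mul_val (u : Rpˣ) (M : GL (Fin 2) Rp) :
    ((zmap u * M : GL (Fin 2) Rp) : Matrix (Fin 2) (Fin 2) Rp)
      = (u : Rp) • (M : Matrix (Fin 2) (Fin 2) Rp) := by
  rw [Units.val_mul]
  show Matrix.scalar (Fin 2) (u : Rp) * _ = _
  rw [Matrix.scalar_apply, ← Matrix.smul_eq_diagonal_mul]

lemma zmap_comm (u : Rpˣ) (M : GL (Fin 2) Rp) : zmap u * M = M * zmap u := by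
  ext1
  rw [Units.val_mul, Units.val_mul]
  exact (Matrix.scalar_commute (u : Rp) (fun r => mul_comm _ _)
    (M : Matrix (Fin 2) (Fin 2) Rp)).eq

abbrev Bg : Type := ↥(BorelGL 2 (Polynomial ℤ))

/-- matrix of an element of `B`. -/
def bmat (M : Bg) : Matrix (Fin 2) (Fin 2) Rp := ((M : GL (Fin 2) Rp) : Matrix (Fin 2) (Fin 2) Rp)

lemma borel_10 (M : Bg) : bmat M 1 0 = 0 := M.2 (show id (0 : Fin 2) < id 1 by decide)

lemma borel_isUnit_det (M : Bg) : IsUnit ((bmat M 0 0) * (bmat M 1 1)) := by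
  have h := (M : GL (Fin 2) Rp).isUnit
  rw [Matrix.isUnit_iff_isUnit_det, Matrix.det_fin_two] at h
  have h10 : ((M : GL (Fin 2) Rp) : Matrix (Fin 2) (Fin 2) Rp) 1 0 = 0 := borel_10 M
  rw [h10, mul_zero, sub_zero] at h
  exact h

lemma borel_isUnit00 (M : Bg) : IsUnit (bmat M 0 0) :=
  isUnit_of_mul_isUnit_left (borel_isUnit_det M)

lemma borel_isUnit11 (M : Bg) : IsUnit (bmat M 1 1) :=
  isUnit_of_mul_isUnit_right (borel_isUnit_det M)

noncomputable def epsOf (M : Bg) : Rpˣ := epsUnit (bmat M 0 1)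

noncomputable def fB (M : Bg) : Bg :=
  ⟨zmap (epsOf M) * (M : GL (Fin 2) Rp), by
    show Matrix.BlockTriangular _ id
    rw [zmap_mul_val]
    intro i j h
    rw [Matrix.smul_apply, M.2 h, smul_zero]⟩

lemma fB_mat (M : Bg) : bmat (fB M) = ((epsOf M : Rp)) • bmat M := zmap_mul_val _ _

lemma bmat_mul (M N : Bg) : bmat (M * N) = bmat M * bmat N := by
  simp [bmat, Units.val_mul]

lemma mul01 (M N : Bg) :
    bmat (M * N) 0 1 = bmat M 0 0 * bmat N 0 1 + bmat M 0 1 * bmat N 1 1 := by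
  rw [bmat_mul, Matrix.mul_apply, Fin.sum_univ_two]

lemma epsOf_mul (M N : Bg) : epsOf (M * N) = epsOf M * epsOf N := by
  unfold epsOf
  rw [mul01, epsUnit_add, epsUnit_unit_mul (borel_isUnit00 M),
    epsUnit_mul_unit _ (borel_isUnit11 N), mul_comm]

lemma fB_mul (M N : Bg) : fB (M * N) = fB M * fB N := by
  apply Subtype.ext
  show zmap (epsOf (M * N)) * ((M * N : Bg) : GL (Fin 2) Rp)
      = (zmap (epsOf M) * (M : GL (Fin 2) Rp)) * (zmap (epsOf N) * (N : GL (Fin 2) Rp))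
  rw [epsOf_mul, _root_.map_mul]
  have hc : (M : GL (Fin 2) Rp) * zmap (epsOf N) = zmap (epsOf N) * (M : GL (Fin 2) Rp) :=
    (zmap_comm _ _).symm
  push_cast
  rw [mul_assoc (zmap (epsOf M)) (zmap (epsOf N)), ← mul_assoc (zmap (epsOf N)), zmap_comm (epsOf N) (M : GL (Fin 2) Rp),
    mul_assoc ((M : GL (Fin 2) Rp)), ← mul_assoc]

lemma epsOf_fB (M : Bg) : epsOf (fB M) = epsOf M := by
  unfold epsOf
  rw [fB_mat, Matrix.smul_apply, smul_eq_mul]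
  exact epsUnit_unit_mul (epsOf M).isUnit _

lemma fB_invol (M : Bg) : fB (fB M) = M := by
  apply Subtype.ext
  show zmap (epsOf (fB M)) * ((fB M : Bg) : GL (Fin 2) Rp) = (M : GL (Fin 2) Rp)
  rw [epsOf_fB]
  show zmap (epsOf M) * (zmap (epsOf M) * (M : GL (Fin 2) Rp)) = _
  rw [← mul_assoc, ← _root_.map_mul]
  have : epsOf M * epsOf M = 1 := epsUnit_sq _
  rw [this, _root_.map_one, one_mul]

noncomputable def phiB : Bg ≃* Bg where
  toFun := fB
  invFun := fB
  left_inv := fB_invol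
  right_inv := fB_invol
  map_mul' := fB_mul

noncomputable def A0 : GL (Fin 2) Rp :=
  ⟨!![1, 1; 0, 1], !![1, -1; 0, 1],
    by rw [Matrix.mul_fin_two, Matrix.one_fin_two]; norm_num,
    by rw [Matrix.mul_fin_two, Matrix.one_fin_two]; norm_num⟩

noncomputable def M0 : Bg :=
  ⟨A0, blockTriangular_fin_two (show (!![1, 1; 0, 1] : Matrix (Fin 2) (Fin 2) Rp) 1 0 = 0 by simp)⟩

lemma M0_memU : M0 ∈ UB 2 Rp := by
  refine ⟨M0.2, ?_⟩
  intro i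
  fin_cases i <;> simp [M0, A0]

lemma phiB_M0_11 : bmat (phiB M0) 1 1 = -1 := by
  have h : bmat (phiB M0) = ((epsOf M0 : Rp)) • bmat M0 := fB_mat M0
  have h01 : bmat M0 0 1 = 1 := by simp [bmat, M0, A0]
  have he : epsOf M0 = -1 := by rw [epsOf, h01, epsUnit_one]
  have h11 : bmat M0 1 1 = 1 := by simp [bmat, M0, A0]
  rw [h, Matrix.smul_apply, h11, he, smul_eq_mul, mul_one]
  simp

end S6aux

/-- The map `M ↦ ε(M₀₁)·M` is an automorphism of `B_2(ℤ[t])` which does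
not preserve `U_2(ℤ[t])`; in particular `U_2(ℤ[t])` is not characteristic in `B_2(ℤ[t])`. -/
theorem statement_6 :
    ∃ φ : ↥(BorelGL 2 (Polynomial ℤ)) ≃* ↥(BorelGL 2 (Polynomial ℤ)),
      (∀ M : ↥(BorelGL 2 (Polynomial ℤ)),
        ((φ M : GL (Fin 2) (Polynomial ℤ)) : Matrix (Fin 2) (Fin 2) (Polynomial ℤ)) =
          ((epsUnit (((M : GL (Fin 2) (Polynomial ℤ)) :
              Matrix (Fin 2) (Fin 2) (Polynomial ℤ)) 0 1) : Polynomial ℤ)) •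
            ((M : GL (Fin 2) (Polynomial ℤ)) : Matrix (Fin 2) (Fin 2) (Polynomial ℤ))) ∧
      Subgroup.map φ.toMonoidHom (UB 2 (Polynomial ℤ)) ≠ UB 2 (Polynomial ℤ) ∧
      ¬ (∀ ψ : ↥(BorelGL 2 (Polynomial ℤ)) ≃* ↥(BorelGL 2 (Polynomial ℤ)),
          Subgroup.map ψ.toMonoidHom (UB 2 (Polynomial ℤ)) = UB 2 (Polynomial ℤ)) := by
  have key : Subgroup.map phiB.toMonoidHom (UB 2 (Polynomial ℤ)) ≠ UB 2 (Polynomial ℤ) := by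
    intro h
    have hmem : phiB M0 ∈ Subgroup.map phiB.toMonoidHom (UB 2 (Polynomial ℤ)) :=
      ⟨M0, M0_memU, rfl⟩
    rw [h] at hmem
    have h11 := hmem.2 1
    have h11' : bmat (phiB M0) 1 1 = 1 := h11
    rw [phiB_M0_11] at h11'
    have : ((-1 : Polynomial ℤ)) ≠ 1 := by
      intro hcon
      have := congrArg (Polynomial.eval 0) hcon
      norm_num at this
    exact this h11'
  exact ⟨phiB, fun M => zmap_mul_val _ _, key, fun h => key (h phiB)⟩
end

section
/- Let p be a prime. For every ring automorphism α of the Laurent polynomial ring F_p[t,t⁻¹]: (i) the additive subgroup {h − α(h) : h ∈ F_p[t,t⁻¹]} has infinite index in (F_p[t,t⁻¹],+); and (ii) the additive subgroup {(h − α(g), g − α(h)) : h, g ∈ F_p[t,t⁻¹]} has infinite index in (F_p[t,t⁻¹],+) × (F_p[t,t⁻¹],+). -/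
open Matrix

open LaurentPolynomial Polynomial

/-- Units of a Laurent polynomial ring over a field are `c * T k`. -/
lemma laurent_unit_form {F : Type*} [Field F] {f : LaurentPolynomial F} (hf : IsUnit f) :
    ∃ (c : Fˣ) (k : ℤ), f = LaurentPolynomial.C (c : F) * T k := by
  obtain ⟨u, rfl⟩ := hf
  obtain ⟨n, f', hf'⟩ := exists_T_pow (u : LaurentPolynomial F)
  obtain ⟨m, g', hg'⟩ := exists_T_pow ((u⁻¹ : (LaurentPolynomial F)ˣ) : LaurentPolynomial F)
  have hui : (u : LaurentPolynomial F) * ((u⁻¹ : (LaurentPolynomial F)ˣ) : LaurentPolynomial F) = 1 := by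
    rw [← Units.val_mul, mul_inv_cancel, Units.val_one]
  have hmul : toLaurent (f' * g') = toLaurent (X ^ (n + m) : F[X]) := by
    rw [_root_.map_mul, hf', hg', toLaurent_X_pow]
    have : (u : LaurentPolynomial F) * T (n : ℤ) * (((u⁻¹ : (LaurentPolynomial F)ˣ) : LaurentPolynomial F) * T (m : ℤ))
        = ((u : LaurentPolynomial F) * ((u⁻¹ : (LaurentPolynomial F)ˣ) : LaurentPolynomial F)) * (T (n : ℤ) * T (m : ℤ)) := by ring
    rw [this, hui, one_mul, ← T_add]
    push_cast
    ring_nf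
  have hfg : f' * g' = X ^ (n + m) := Polynomial.toLaurent_injective hmul
  have hdvd : f' ∣ X ^ (n + m) := ⟨g', hfg.symm⟩
  obtain ⟨i, _, hassoc⟩ := (dvd_prime_pow Polynomial.prime_X (n + m)).mp hdvd
  obtain ⟨v, hv⟩ := hassoc
  obtain ⟨r, hr, hrv⟩ := Polynomial.isUnit_iff.mp (v⁻¹ : F[X]ˣ).isUnit
  have hf'eq : f' = Polynomial.C r * X ^ i := by
    have : f' = X ^ i * ((v⁻¹ : F[X]ˣ) : F[X]) := by
      rw [← hv]; rw [_root_.mul_assoc]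
      simp
    rw [this, ← hrv]; ring
  refine ⟨hr.unit, (i : ℤ) - n, ?_⟩
  have huf : (u : LaurentPolynomial F) = toLaurent f' * T (-(n : ℤ)) := by
    have := congrArg (· * T (-(n : ℤ))) hf'
    simpa using this.symm
  rw [huf, hf'eq, _root_.map_mul, Polynomial.toLaurent_C, toLaurent_X_pow]
  rw [IsUnit.unit_spec, _root_.mul_assoc, ← T_add]
  congr 1

/-- If there are functionals killing `S` and elements separated by them,
the quotient is infinite. -/
lemma infinite_quot_of_functionals {A M : Type*} [AddCommGroup A] [AddCommGroup M]
    (S : AddSubgroup A) (ψ : ℕ → (A →+ M)) (x : ℕ → A)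
    (hker : ∀ j, ∀ s ∈ S, ψ j s = 0)
    (hne : ∀ i, ψ i (x i) ≠ 0)
    (hzero : ∀ i j, i ≠ j → ψ i (x j) = 0) :
    Infinite (A ⧸ S) := by
  refine Infinite.of_injective (fun j => QuotientAddGroup.mk (s := S) (x j)) ?_
  intro i j hij
  by_contra hne'
  have hmem : -(x i) + x j ∈ S := QuotientAddGroup.eq.mp hij
  have := hker i _ hmem
  rw [_root_.map_add, map_neg, hzero i j hne', add_zero, neg_eq_zero] at this
  exact hne i this


lemma main_lemma (p : ℕ) [Fact p.Prime]
    (β : LaurentPolynomial (ZMod p) ≃+* LaurentPolynomial (ZMod p)) :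
    Infinite (LaurentPolynomial (ZMod p) ⧸ diffSubgroup β.toRingHom.toAddMonoidHom) := by
  set A := LaurentPolynomial (ZMod p)
  -- β fixes constants
  have hC : ∀ a : ZMod p, β (LaurentPolynomial.C a) = LaurentPolynomial.C a := by
    intro a
    have : β.toRingHom.comp LaurentPolynomial.C = LaurentPolynomial.C :=
      Subsingleton.elim _ _
    exact DFunLike.congr_fun this a
  -- the image of T 1
  obtain ⟨c, k, hT1⟩ := laurent_unit_form ((isUnit_T (R := ZMod p) 1).map β.toRingHom)
  have hT1' : β (T 1) = LaurentPolynomial.C (c : ZMod p) * T k := hT1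
  have hCT : ∀ (a b : ZMod p) (m l : ℤ),
      (LaurentPolynomial.C a * T m) * (LaurentPolynomial.C b * T l) =
        LaurentPolynomial.C (a * b) * T (m + l) := by
    intro a b m l
    rw [_root_.map_mul, T_add]
    ring
  -- β on all powers of T
  have hTn : ∀ n : ℤ, β (T n) = LaurentPolynomial.C ((c ^ n : (ZMod p)ˣ) : ZMod p) * T (k * n) := by
    intro n
    induction n using Int.induction_on with
    | zero => simp
    | succ n ih =>
        rw [show T ((n : ℤ) + 1) = T (n : ℤ) * T 1 from T_add n 1, _root_.map_mul, ih, hT1', hCT]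
        rw [show ((c ^ ((n:ℤ)+1) : (ZMod p)ˣ) : ZMod p) = ((c ^ (n:ℤ) : (ZMod p)ˣ) : ZMod p) * (c : ZMod p) by
          rw [_root_.zpow_add_one, Units.val_mul]]
        rw [show k * (n : ℤ) + k = k * ((n:ℤ)+1) by ring]
    | pred n ih =>
        have hu : IsUnit (β (T 1)) := (isUnit_T (R := ZMod p) 1).map β.toRingHom
        refine hu.mul_right_cancel ?_
        rw [← _root_.map_mul, ← T_add, show (-(n : ℤ) - 1) + 1 = -(n : ℤ) by ring, ih, hT1', hCT]
        rw [show ((c ^ (-(n:ℤ)) : (ZMod p)ˣ) : ZMod p)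
            = ((c ^ (-(n:ℤ)-1) : (ZMod p)ˣ) : ZMod p) * (c : ZMod p) by
          rw [← Units.val_mul, ← _root_.zpow_add_one]; ring_nf]
        rw [show k * (-(n:ℤ)) = k * (-(n:ℤ)-1) + k by ring]
  have hsingle : ∀ (n : ℤ) (a : ZMod p),
      β (AddMonoidAlgebra.single n a) = AddMonoidAlgebra.single (k * n) (a * ((c ^ n : (ZMod p)ˣ) : ZMod p)) := by
    intro n a
    rw [single_eq_C_mul_T, _root_.map_mul, hC, hTn, single_eq_C_mul_T, ← _root_.mul_assoc, ← _root_.map_mul]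
  have hk : k = 1 ∨ k = -1 := by
    by_contra hcon
    push_neg at hcon
    have hknone : ∀ n : ℤ, k * n ≠ 1 := by
      intro n h
      rcases Int.isUnit_iff.mp (IsUnit.of_mul_eq_one n h) with h1 | h1
      exacts [hcon.1 h1, hcon.2 h1]
    have hall : ∀ h : A, (β h).coeff 1 = 0 := by
      intro h
      induction h using LaurentPolynomial.induction_on' with
      | add f g hf hg => rw [_root_.map_add, AddMonoidAlgebra.coeff_add, Finsupp.add_apply, hf, hg, add_zero]
      | C_mul_T n a =>
          rw [← single_eq_C_mul_T, hsingle, AddMonoidAlgebra.coeff_single, Finsupp.single_apply, if_neg (hknone n)]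
    have h1 : (T 1 : A).coeff 1 = 0 := by
      have := hall (β.symm (T 1))
      rwa [RingEquiv.apply_symm_apply] at this
    rw [T_apply, if_pos rfl] at h1
    exact one_ne_zero h1
  have hkk : k * k = 1 := by rcases hk with h | h <;> simp [h]
  have hcoeff : ∀ (h : A) (m : ℤ),
      (β h).coeff m = ((c ^ (k * m) : (ZMod p)ˣ) : ZMod p) * h.coeff (k * m) := by
    intro h m
    induction h using LaurentPolynomial.induction_on' with
    | add f g hf hg => rw [_root_.map_add, AddMonoidAlgebra.coeff_add, Finsupp.add_apply, hf, hg, AddMonoidAlgebra.coeff_add, Finsupp.add_apply, mul_add]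
    | C_mul_T n a =>
        rw [← single_eq_C_mul_T, hsingle, AddMonoidAlgebra.coeff_single, AddMonoidAlgebra.coeff_single, Finsupp.single_apply, Finsupp.single_apply]
        by_cases hnm : n = k * m
        · have h1 : k * n = m := by rw [hnm, ← _root_.mul_assoc, hkk, one_mul]
          rw [if_pos h1, if_pos hnm, hnm, _root_.mul_comm]
        · have h2 : k * n ≠ m := by
            intro h
            exact hnm (by rw [← h, ← _root_.mul_assoc, hkk, one_mul])
          rw [if_neg h2, if_neg hnm, mul_zero]
  -- the exponents `(j+1)*(p-1)`
  set m : ℕ → ℤ := fun j => ((j : ℤ) + 1) * ((p : ℤ) - 1) with hm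
  have hp2 : 2 ≤ p := (Fact.out : p.Prime).two_le
  have hppos : (0 : ℤ) < (p : ℤ) - 1 := by
    have : (2 : ℤ) ≤ p := by exact_mod_cast hp2
    omega
  have hmpos : ∀ j, 0 < m j := by
    intro j
    apply mul_pos (by positivity) hppos
  have hminj : Function.Injective m := by
    intro i j hij
    have : ((i : ℤ) + 1) = ((j : ℤ) + 1) := by
      exact mul_right_cancel₀ (by omega) hij
    omega
  have hcm : ∀ j, (c ^ (m j) : (ZMod p)ˣ) = 1 := by
    intro j
    have h1 : ((p : ℤ) - 1) = ((p - 1 : ℕ) : ℤ) := by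
      have : (2 : ℤ) ≤ p := by exact_mod_cast hp2
      omega
    rw [hm]
    simp only []
    rw [_root_.mul_comm, _root_.zpow_mul, h1, _root_.zpow_natCast, ZMod.units_pow_card_sub_one_eq_one, _root_.one_zpow]
  have hcmneg : ∀ j, (c ^ (-(m j)) : (ZMod p)ˣ) = 1 := by
    intro j
    rw [_root_.zpow_neg, hcm, _root_.inv_one]
  -- coefficient functionals
  set φ : ℤ → (A →+ ZMod p) := fun n =>
    AddMonoidHom.mk' (fun f => f.coeff n) (fun f g => Finsupp.add_apply f.coeff g.coeff n) with hφ
  have hφ_apply : ∀ (n : ℤ) (f : A), φ n f = f.coeff n := fun _ _ => rfl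
  have hker : ∀ s ∈ diffSubgroup β.toRingHom.toAddMonoidHom,
      ∃ h : A, ∀ n : ℤ, s.coeff n = h.coeff n - ((c ^ (k * n) : (ZMod p)ˣ) : ZMod p) * h.coeff (k * n) := by
    rintro s ⟨h, rfl⟩
    refine ⟨h, fun n => ?_⟩
    have hsub : ((AddMonoidHom.id A - β.toRingHom.toAddMonoidHom) h) = h - β h := rfl
    rw [hsub, AddMonoidAlgebra.coeff_sub, Finsupp.sub_apply, hcoeff]
  rcases hk with hk1 | hk1
  · -- case k = 1
    refine infinite_quot_of_functionals _ (fun j => φ (m j)) (fun j => T (m j)) ?_ ?_ ?_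
    · rintro j s hs
      obtain ⟨h, hh⟩ := hker s hs
      rw [hφ_apply, hh, hk1, one_mul, hcm, Units.val_one, one_mul, sub_self]
    · intro i
      rw [hφ_apply, T_apply, if_pos rfl]
      exact one_ne_zero
    · intro i j hij
      rw [hφ_apply, T_apply, if_neg (fun h => hij (hminj h).symm)]
  · -- case k = -1
    refine infinite_quot_of_functionals _ (fun j => φ (m j) + φ (-(m j)))
      (fun j => T (m j)) ?_ ?_ ?_
    · rintro j s hs
      obtain ⟨h, hh⟩ := hker s hs
      rw [AddMonoidHom.add_apply, hφ_apply, hφ_apply, hh, hh, hk1]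
      rw [neg_one_mul, neg_one_mul, neg_neg, hcm, hcmneg]
      push_cast
      ring
    · intro i
      have hne : m i ≠ -(m i) := by have := hmpos i; omega
      rw [AddMonoidHom.add_apply, hφ_apply, hφ_apply, T_apply, T_apply, if_pos rfl,
        if_neg hne, add_zero]
      exact one_ne_zero
    · intro i j hij
      have h1 : m j ≠ m i := fun h => hij (hminj h).symm
      have h2 : m j ≠ -(m i) := by have := hmpos i; have := hmpos j; omega
      rw [AddMonoidHom.add_apply, hφ_apply, hφ_apply, T_apply, T_apply, if_neg h1,
        if_neg h2, add_zero]

theorem statement13_part2 (p : ℕ) [Fact p.Prime]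
    (α : LaurentPolynomial (ZMod p) ≃+* LaurentPolynomial (ZMod p)) :
    Infinite ((LaurentPolynomial (ZMod p) × LaurentPolynomial (ZMod p)) ⧸
      flipDiffSubgroup α.toRingHom.toAddMonoidHom) := by
  haveI := main_lemma p (α.trans α)
  set A := LaurentPolynomial (ZMod p)
  set f := α.toRingHom.toAddMonoidHom with hf
  set D := diffSubgroup (α.trans α).toRingHom.toAddMonoidHom with hD
  set s : A × A →+ A := (AddMonoidHom.fst _ _) + f.comp (AddMonoidHom.snd _ _) with hs
  have hle : flipDiffSubgroup f ≤ D.comap s := by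
    rintro x ⟨⟨h, g⟩, rfl⟩
    refine ⟨h, ?_⟩
    show h - α (α h) = s _
    simp only [hs, AddMonoidHom.sub_apply, AddMonoidHom.id_apply, AddMonoidHom.prod_apply,
      AddMonoidHom.coe_comp, Function.comp_apply, AddMonoidHom.coe_fst, AddMonoidHom.coe_snd,
      AddMonoidHom.add_apply, Prod.fst_sub, Prod.snd_sub, _root_.map_sub, hf]
    abel
  have hsurj : Function.Surjective (QuotientAddGroup.map _ D s hle) := by
    intro y
    obtain ⟨a, rfl⟩ := QuotientAddGroup.mk_surjective y
    exact ⟨QuotientAddGroup.mk (a, 0), by simp [QuotientAddGroup.map_mk, hs]⟩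
  exact Infinite.of_surjective _ hsurj

/-- For every ring automorphism `α` of `F_p[t,t⁻¹]`, the subgroup
`{h - α h}` has infinite index in `(F_p[t,t⁻¹],+)`, and `{(h - α g, g - α h)}` has
infinite index in `(F_p[t,t⁻¹],+) × (F_p[t,t⁻¹],+)`. -/
theorem statement_13 (p : ℕ) [Fact p.Prime]
    (α : LaurentPolynomial (ZMod p) ≃+* LaurentPolynomial (ZMod p)) :
    Infinite (LaurentPolynomial (ZMod p) ⧸ diffSubgroup α.toRingHom.toAddMonoidHom) ∧
    Infinite ((LaurentPolynomial (ZMod p) × LaurentPolynomial (ZMod p)) ⧸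
      flipDiffSubgroup α.toRingHom.toAddMonoidHom) := by
  exact ⟨main_lemma p α, statement13_part2 p α⟩
end

section
/- Let F_q be a finite field with q elements. Then: (i) there exists an automorphism Φ of the additive group (F_q[t],+) such that for every a ∈ F_q^× the map r ↦ r − a·Φ(r) is surjective on F_q[t] (so the automorphism r ↦ a·Φ(r) has exactly one twisted conjugacy class); (ii) the group Aff(F_q[t]) admits an automorphism with only finitely many twisted conjugacy classes; and (iii) the group B_2(F_q[t]) admits an automorphism with only finitely many twisted conjugacy classes. In particular, none of (F_q[t],+), Aff(F_q[t]), B_2(F_q[t]) has property R∞. -/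
open Matrix

noncomputable section Aux
open Polynomial

instance polyCountable (F : Type*) [Semiring F] [Countable F] : Countable (Polynomial F) :=
  have : Countable (AddMonoidAlgebra F ℕ) :=
    (AddMonoidAlgebra.coeff_injective (R := F) (M := ℕ)).countable
  Function.Injective.countable (f := Polynomial.toFinsupp)
    (fun p q h => by cases p; cases q; simpa using h)

lemma rank_eq_aleph0 (F M : Type*) [Field F] [Finite F] [AddCommGroup M] [Module F M]
    [Countable M] [Infinite M] : Module.rank F M = Cardinal.aleph0 := by
  obtain ⟨⟨ι, b⟩⟩ := Module.Free.exists_basis (R := F) (M := M)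
  rw [← b.mk_eq_rank'']
  have hle : Cardinal.mk ι ≤ Cardinal.aleph0 := by
    calc Cardinal.mk ι ≤ Cardinal.mk M := Cardinal.mk_le_of_injective b.injective
    _ ≤ Cardinal.aleph0 := Cardinal.mk_le_aleph0
  refine le_antisymm hle (not_lt.1 fun hlt => ?_)
  have : Finite ι := Cardinal.lt_aleph0_iff_finite.mp hlt
  have : Module.Finite F M := Module.Finite.of_basis b
  have : Finite M := Module.finite_of_finite F
  exact absurd this (Infinite.not_finite)

section Phi
variable {Fq : Type*} [Field Fq] [Fintype Fq]

lemma exists_good_d (Fq : Type*) [Field Fq] [Fintype Fq] :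
    ∃ d : Fq, ∀ b : Fq, b * b - b - d ≠ 0 := by
  by_contra h
  push_neg at h
  have hsurj : Function.Surjective (fun b : Fq => b * b - b) := by
    intro v
    obtain ⟨b, hb⟩ := h v
    exact ⟨b, by linear_combination hb⟩
  have hinj := Finite.injective_iff_surjective.mpr hsurj
  have h01 : (0 : Fq) = 1 := hinj (by ring_nf)
  exact zero_ne_one h01

variable {d : Fq} (hd : ∀ b : Fq, b * b - b - d ≠ 0)

lemma good_d_ne_zero (hd : ∀ b : Fq, b * b - b - d ≠ 0) : d ≠ 0 := by
  have := hd 0; intro h; apply this; rw [h]; ring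

lemma good_delta_ne_zero (hd : ∀ b : Fq, b * b - b - d ≠ 0) {a : Fq} (ha : a ≠ 0) :
    1 - a - d * a * a ≠ 0 := by
  intro h
  apply hd a⁻¹
  have : a⁻¹ * a⁻¹ - a⁻¹ - d = a⁻¹ * a⁻¹ * (1 - a - d * a * a) := by
    field_simp
  rw [this, h, mul_zero]

variable (M : Type*) [AddCommGroup M] [Module Fq M]

/-- The companion-matrix linear automorphism on `M × M`. -/
def Tmap (d : Fq) (hd0 : d ≠ 0) : (M × M) ≃ₗ[Fq] (M × M) where
  toFun z := (d • z.2, z.1 + z.2)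
  invFun z := (z.2 - d⁻¹ • z.1, d⁻¹ • z.1)
  map_add' z w := by
    ext <;> simp [smul_add] <;> abel
  map_smul' c z := by
    ext <;> simp [smul_add, smul_comm c d] <;> module
  left_inv z := by
    ext <;> simp [smul_smul, inv_mul_cancel₀ hd0] <;> abel
  right_inv z := by
    ext <;> simp [smul_smul, mul_inv_cancel₀ hd0, inv_mul_cancel₀ hd0] <;> abel

lemma Tmap_surj_aux (d : Fq) (hd0 : d ≠ 0) (hd : ∀ b : Fq, b * b - b - d ≠ 0)
    {a : Fq} (ha : a ≠ 0) :
    Function.Surjective (fun z : M × M => z - a • Tmap M d hd0 z) := by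
  intro w
  have hδ : 1 - a - d * a * a ≠ 0 := good_delta_ne_zero hd ha
  set δ : Fq := 1 - a - d * a * a with hδdef
  refine ⟨(δ⁻¹ • ((1 - a) • w.1 + (a * d) • w.2), δ⁻¹ • (a • w.1 + w.2)), ?_⟩
  have hδδ : δ⁻¹ * δ = 1 := inv_mul_cancel₀ hδ
  ext
  · show δ⁻¹ • ((1 - a) • w.1 + (a * d) • w.2) - a • (d • (δ⁻¹ • (a • w.1 + w.2))) = w.1
    match_scalars <;> (field_simp; try ring)
  · show δ⁻¹ • (a • w.1 + w.2) -
      a • (δ⁻¹ • ((1 - a) • w.1 + (a * d) • w.2) + δ⁻¹ • (a • w.1 + w.2)) = w.2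
    match_scalars <;> (field_simp; try ring)

end Phi

section PhiPoly
variable (Fq : Type*) [Field Fq] [Fintype Fq]

def goodD : Fq := (exists_good_d Fq).choose

lemma goodD_spec : ∀ b : Fq, b * b - b - goodD Fq ≠ 0 := (exists_good_d Fq).choose_spec

def eEquiv : Polynomial Fq ≃ₗ[Fq] (Polynomial Fq × Polynomial Fq) :=
  (nonempty_linearEquiv_of_rank_eq
    (by rw [rank_eq_aleph0, rank_eq_aleph0])).some

/-- The key linear automorphism of `Fq[t]`. -/
def PhiLin : Polynomial Fq ≃ₗ[Fq] Polynomial Fq :=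
  (eEquiv Fq) ≪≫ₗ
    Tmap (Polynomial Fq) (goodD Fq) (good_d_ne_zero (goodD_spec Fq)) ≪≫ₗ (eEquiv Fq).symm

lemma PhiLin_surj {a : Fq} (ha : a ≠ 0) :
    Function.Surjective (fun r => r - C a * PhiLin Fq r) := by
  intro f
  obtain ⟨z, hz⟩ := Tmap_surj_aux (Polynomial Fq) (goodD Fq)
    (good_d_ne_zero (goodD_spec Fq)) (goodD_spec Fq) ha ((eEquiv Fq) f)
  refine ⟨(eEquiv Fq).symm z, ?_⟩
  show (eEquiv Fq).symm z - C a * PhiLin Fq ((eEquiv Fq).symm z) = f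
  rw [← smul_eq_C_mul]
  simp only [PhiLin, LinearEquiv.trans_apply, LinearEquiv.apply_symm_apply]
  rw [← _root_.map_smul, ← _root_.map_sub]
  rw [show z - a • (Tmap (Polynomial Fq) (goodD Fq) (good_d_ne_zero (goodD_spec Fq))) z
      = (eEquiv Fq) f from hz]
  exact (eEquiv Fq).symm_apply_apply f

lemma PhiLin_unit_mul (p q : Polynomial Fq) (hp : IsUnit p) :
    PhiLin Fq (p * q) = p * PhiLin Fq q := by
  obtain ⟨c, -, rfl⟩ := Polynomial.isUnit_iff.mp hp
  rw [← smul_eq_C_mul, ← smul_eq_C_mul, _root_.map_smul]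

lemma PhiLin_surj2 {a b : Fq} (ha : a ≠ 0) (hb : b ≠ 0) :
    Function.Surjective (fun s => s * C b - C a * PhiLin Fq s) := by
  intro w
  obtain ⟨s, hs⟩ := PhiLin_surj Fq (a := a * b⁻¹) (by simp [ha, hb]) (C b⁻¹ * w)
  refine ⟨s, ?_⟩
  simp only at hs
  have key : s * C b - C a * PhiLin Fq s = C b * (s - C (a * b⁻¹) * PhiLin Fq s) := by
    rw [mul_sub, ← mul_assoc, ← C_mul]
    rw [show b * (a * b⁻¹) = a by field_simp]
    ring
  show s * C b - C a * PhiLin Fq s = w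
  rw [key, hs, ← mul_assoc, ← C_mul, mul_inv_cancel₀ hb, C_1, one_mul]

end PhiPoly

section MkAff
variable {R : Type*} [CommRing R]

def mkAff (u : Rˣ) (r : R) : ↥(AffGL R) :=
  ⟨⟨!![(u : R), r; 0, 1], !![((u⁻¹ : Rˣ) : R), -(((u⁻¹ : Rˣ) : R) * r); 0, 1],
    by
      ext i j
      fin_cases i <;> fin_cases j <;>
        simp [Matrix.mul_apply, Fin.sum_univ_two, Matrix.one_apply, ← mul_assoc],
    by
      ext i j
      fin_cases i <;> fin_cases j <;>
        simp [Matrix.mul_apply, Fin.sum_univ_two, Matrix.one_apply, ← mul_assoc]⟩,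
    by constructor <;> simp⟩

lemma mkAff_val (u : Rˣ) (r : R) :
    ((mkAff u r : ↥(AffGL R)) : GL (Fin 2) R).val = !![(u : R), r; 0, 1] := rfl

lemma mkAff_00 (u : Rˣ) (r : R) :
    ((mkAff u r : ↥(AffGL R)) : GL (Fin 2) R).val 0 0 = (u : R) := by
  rw [mkAff_val]; simp

lemma mkAff_01 (u : Rˣ) (r : R) :
    ((mkAff u r : ↥(AffGL R)) : GL (Fin 2) R).val 0 1 = r := by
  rw [mkAff_val]; simp

lemma mkAff_mul (u u' : Rˣ) (r r' : R) :
    mkAff u r * mkAff u' r' = mkAff (u * u') ((u : R) * r' + r) := by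
  refine Subtype.ext (Units.ext ?_)
  show (mkAff u r : GL (Fin 2) R).val * (mkAff u' r' : GL (Fin 2) R).val = _
  rw [mkAff_val, mkAff_val, mkAff_val]
  ext i j
  fin_cases i <;> fin_cases j <;> simp [Matrix.mul_apply, Fin.sum_univ_two]

lemma mkAff_inv (u : Rˣ) (r : R) :
    (mkAff u r)⁻¹ = mkAff u⁻¹ (-(((u⁻¹ : Rˣ) : R) * r)) :=
  Subtype.ext (Units.ext rfl)

end MkAff

section UA
variable {R : Type*} [CommRing R]

lemma aff_mul_00 (m n : ↥(AffGL R)) :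
    ((m * n : ↥(AffGL R)) : GL (Fin 2) R).val 0 0 =
      (m : GL (Fin 2) R).val 0 0 * (n : GL (Fin 2) R).val 0 0 := by
  have h : ((m * n : ↥(AffGL R)) : GL (Fin 2) R).val =
      (m : GL (Fin 2) R).val * (n : GL (Fin 2) R).val := rfl
  rw [h, Matrix.mul_apply, Fin.sum_univ_two]
  have h10 : (n : GL (Fin 2) R).val 1 0 = 0 := n.2.1
  rw [h10, mul_zero, add_zero]

/-- The upper-left entry of an affine matrix, as a unit. -/
def uA (m : ↥(AffGL R)) : Rˣ where
  val := (m : GL (Fin 2) R).val 0 0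
  inv := ((m⁻¹ : ↥(AffGL R)) : GL (Fin 2) R).val 0 0
  val_inv := by
    rw [← aff_mul_00, mul_inv_cancel]
    exact Matrix.one_apply_eq 0
  inv_val := by
    rw [← aff_mul_00, inv_mul_cancel]
    exact Matrix.one_apply_eq 0

@[simp] lemma uA_mkAff (u : Rˣ) (r : R) : uA (mkAff u r) = u :=
  Units.ext (mkAff_00 u r)

lemma aff_eq_mkAff (m : ↥(AffGL R)) :
    m = mkAff (uA m) ((m : GL (Fin 2) R).val 0 1) := by
  refine Subtype.ext (Units.ext ?_)
  rw [mkAff_val]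
  ext i j
  fin_cases i <;> fin_cases j
  · rfl
  · rfl
  · exact m.2.1.trans (by simp)
  · exact m.2.2.trans (by simp)

lemma exists_mkAff (m : ↥(AffGL R)) : ∃ u r, m = mkAff u r :=
  ⟨_, _, aff_eq_mkAff m⟩

end UA

section PsiAff
open Polynomial
variable {Fq : Type*} [Field Fq]

lemma lin_unit_mul (Φ : Polynomial Fq →ₗ[Fq] Polynomial Fq) (p q : Polynomial Fq)
    (hp : IsUnit p) : Φ (p * q) = p * Φ q := by
  obtain ⟨c, -, rfl⟩ := Polynomial.isUnit_iff.mp hp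
  rw [← smul_eq_C_mul, ← smul_eq_C_mul]
  exact Φ.map_smul c q

/-- The automorphism of `Aff(Fq[t])` induced by a linear automorphism `Φ`. -/
noncomputable def psiAff (Φ : Polynomial Fq ≃ₗ[Fq] Polynomial Fq) :
    ↥(AffGL (Polynomial Fq)) ≃* ↥(AffGL (Polynomial Fq)) where
  toFun m := mkAff (uA m) (Φ ((m : GL (Fin 2) (Polynomial Fq)).val 0 1))
  invFun m := mkAff (uA m) (Φ.symm ((m : GL (Fin 2) (Polynomial Fq)).val 0 1))
  left_inv m := by
    obtain ⟨u, r, rfl⟩ := exists_mkAff m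
    simp [uA_mkAff, mkAff_01]
  right_inv m := by
    obtain ⟨u, r, rfl⟩ := exists_mkAff m
    simp [uA_mkAff, mkAff_01]
  map_mul' m n := by
    obtain ⟨u, r, rfl⟩ := exists_mkAff m
    obtain ⟨u', r', rfl⟩ := exists_mkAff n
    rw [mkAff_mul]
    simp only [uA_mkAff, mkAff_01]
    rw [mkAff_mul]
    congr 1
    rw [map_add]
    have h := lin_unit_mul (Φ : Polynomial Fq →ₗ[Fq] Polynomial Fq) (↑u) r' u.isUnit
    simp only [LinearEquiv.coe_coe] at h
    rw [h]

lemma psiAff_mkAff (Φ : Polynomial Fq ≃ₗ[Fq] Polynomial Fq) (u : (Polynomial Fq)ˣ)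
    (r : Polynomial Fq) : psiAff Φ (mkAff u r) = mkAff u (Φ r) := by
  show mkAff _ _ = _
  rw [uA_mkAff, mkAff_01]

end PsiAff

lemma twisted_shift {G : Type*} [Group G] (φ : G ≃* G) (g x : G) :
    TwistedConjClass φ (x * g * (φ x)⁻¹) = TwistedConjClass φ g := by
  ext h
  constructor
  · rintro ⟨y, rfl⟩
    exact ⟨y * x, by rw [_root_.map_mul]; group⟩
  · rintro ⟨z, rfl⟩
    exact ⟨z * x⁻¹, by rw [_root_.map_mul, _root_.map_inv]; group⟩

section UnitsFinite
variable {Fq : Type*} [Field Fq] [Fintype Fq]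

lemma units_finite : Finite (Polynomial Fq)ˣ := by
  apply Finite.of_injective (fun u : (Polynomial Fq)ˣ => ((u : Polynomial Fq)).coeff 0)
  intro u v h
  obtain ⟨c, -, hc⟩ := Polynomial.isUnit_iff.mp u.isUnit
  obtain ⟨e, -, he⟩ := Polynomial.isUnit_iff.mp v.isUnit
  have hce : c = e := by
    have h2 : (u : Polynomial Fq).coeff 0 = (v : Polynomial Fq).coeff 0 := h
    rw [← hc, ← he] at h2
    simpa using h2
  exact Units.ext (by rw [← hc, ← he, hce])

lemma class_mkAff (Φ : Polynomial Fq ≃ₗ[Fq] Polynomial Fq)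
    (hsurj : ∀ a : Fq, a ≠ 0 → Function.Surjective
      (fun r : Polynomial Fq => r - Polynomial.C a * Φ r))
    (u : (Polynomial Fq)ˣ) (r : Polynomial Fq) :
    TwistedConjClass (psiAff Φ) (mkAff u r) = TwistedConjClass (psiAff Φ) (mkAff u 0) := by
  obtain ⟨c, hcu, hc⟩ := Polynomial.isUnit_iff.mp u.isUnit
  have hc0 : c ≠ 0 := fun h => by simp [h] at hcu
  obtain ⟨s, hs⟩ := hsurj c hc0 r
  simp only at hs
  have key : mkAff u r = mkAff 1 s * mkAff u 0 * (psiAff Φ (mkAff 1 s))⁻¹ := by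
    rw [psiAff_mkAff, mkAff_inv, mkAff_mul, mkAff_mul]
    congr 1
    · simp
    · simp only [one_mul, mul_one, Units.val_one, inv_one, mul_zero, zero_add]
      rw [← hc]
      linear_combination -hs
  rw [key, twisted_shift]

lemma reidemeister_aff_finite (Φ : Polynomial Fq ≃ₗ[Fq] Polynomial Fq)
    (hsurj : ∀ a : Fq, a ≠ 0 → Function.Surjective
      (fun r : Polynomial Fq => r - Polynomial.C a * Φ r)) :
    (ReidemeisterClasses (psiAff Φ)).Finite := by
  have : Finite (Polynomial Fq)ˣ := units_finite
  apply Set.Finite.subset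
    (Set.finite_range (fun u : (Polynomial Fq)ˣ => TwistedConjClass (psiAff Φ) (mkAff u 0)))
  rintro _ ⟨g, rfl⟩
  refine ⟨uA g, ?_⟩
  conv_rhs => rw [aff_eq_mkAff g]
  rw [class_mkAff Φ hsurj]

end UnitsFinite

section MkB
variable {R : Type*} [CommRing R]

lemma bor_10 (m : ↥(BorelGL 2 R)) : (m : GL (Fin 2) R).val 1 0 = 0 :=
  m.2 (show (id (0 : Fin 2) : Fin 2) < id 1 by decide)

noncomputable def mkB (u v : Rˣ) (r : R) : ↥(BorelGL 2 R) :=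
  ⟨⟨!![(u : R), r; 0, (v : R)],
    !![((u⁻¹ : Rˣ) : R), -(((u⁻¹ : Rˣ) : R) * r * ((v⁻¹ : Rˣ) : R)); 0, ((v⁻¹ : Rˣ) : R)],
    by
      ext i j
      fin_cases i <;> fin_cases j <;>
        simp [Matrix.mul_apply, Fin.sum_univ_two, Matrix.one_apply, ← mul_assoc],
    by
      ext i j
      fin_cases i <;> fin_cases j <;>
        simp [Matrix.mul_apply, Fin.sum_univ_two, Matrix.one_apply, ← mul_assoc,
          mul_assoc]⟩,
    blockTriangular_fin_two (by simp)⟩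

lemma mkB_val (u v : Rˣ) (r : R) :
    ((mkB u v r : ↥(BorelGL 2 R)) : GL (Fin 2) R).val = !![(u : R), r; 0, (v : R)] := rfl

lemma mkB_00 (u v : Rˣ) (r : R) :
    ((mkB u v r : ↥(BorelGL 2 R)) : GL (Fin 2) R).val 0 0 = (u : R) := by
  rw [mkB_val]; simp

lemma mkB_11 (u v : Rˣ) (r : R) :
    ((mkB u v r : ↥(BorelGL 2 R)) : GL (Fin 2) R).val 1 1 = (v : R) := by
  rw [mkB_val]; simp

lemma mkB_01 (u v : Rˣ) (r : R) :
    ((mkB u v r : ↥(BorelGL 2 R)) : GL (Fin 2) R).val 0 1 = r := by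
  rw [mkB_val]; simp

lemma mkB_mul (u u' v v' : Rˣ) (r r' : R) :
    mkB u v r * mkB u' v' r' = mkB (u * u') (v * v') ((u : R) * r' + r * (v' : R)) := by
  refine Subtype.ext (Units.ext ?_)
  show (mkB u v r : GL (Fin 2) R).val * (mkB u' v' r' : GL (Fin 2) R).val = _
  rw [mkB_val, mkB_val, mkB_val]
  ext i j
  fin_cases i <;> fin_cases j <;> simp [Matrix.mul_apply, Fin.sum_univ_two]

lemma mkB_inv (u v : Rˣ) (r : R) :
    (mkB u v r)⁻¹ = mkB u⁻¹ v⁻¹ (-(((u⁻¹ : Rˣ) : R) * r * ((v⁻¹ : Rˣ) : R))) :=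
  Subtype.ext (Units.ext rfl)

lemma bor_mul_00 (m n : ↥(BorelGL 2 R)) :
    ((m * n : ↥(BorelGL 2 R)) : GL (Fin 2) R).val 0 0 =
      (m : GL (Fin 2) R).val 0 0 * (n : GL (Fin 2) R).val 0 0 := by
  have h : ((m * n : ↥(BorelGL 2 R)) : GL (Fin 2) R).val =
      (m : GL (Fin 2) R).val * (n : GL (Fin 2) R).val := rfl
  rw [h, Matrix.mul_apply, Fin.sum_univ_two, bor_10 n, mul_zero, add_zero]

lemma bor_mul_11 (m n : ↥(BorelGL 2 R)) :
    ((m * n : ↥(BorelGL 2 R)) : GL (Fin 2) R).val 1 1 =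
      (m : GL (Fin 2) R).val 1 1 * (n : GL (Fin 2) R).val 1 1 := by
  have h : ((m * n : ↥(BorelGL 2 R)) : GL (Fin 2) R).val =
      (m : GL (Fin 2) R).val * (n : GL (Fin 2) R).val := rfl
  rw [h, Matrix.mul_apply, Fin.sum_univ_two, bor_10 m, zero_mul, zero_add]

noncomputable def uBor (m : ↥(BorelGL 2 R)) : Rˣ where
  val := (m : GL (Fin 2) R).val 0 0
  inv := ((m⁻¹ : ↥(BorelGL 2 R)) : GL (Fin 2) R).val 0 0
  val_inv := by rw [← bor_mul_00, mul_inv_cancel]; exact Matrix.one_apply_eq 0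
  inv_val := by rw [← bor_mul_00, inv_mul_cancel]; exact Matrix.one_apply_eq 0

noncomputable def vBor (m : ↥(BorelGL 2 R)) : Rˣ where
  val := (m : GL (Fin 2) R).val 1 1
  inv := ((m⁻¹ : ↥(BorelGL 2 R)) : GL (Fin 2) R).val 1 1
  val_inv := by rw [← bor_mul_11, mul_inv_cancel]; exact Matrix.one_apply_eq 1
  inv_val := by rw [← bor_mul_11, inv_mul_cancel]; exact Matrix.one_apply_eq 1

@[simp] lemma uBor_mkB (u v : Rˣ) (r : R) : uBor (mkB u v r) = u :=
  Units.ext (mkB_00 u v r)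

@[simp] lemma vBor_mkB (u v : Rˣ) (r : R) : vBor (mkB u v r) = v :=
  Units.ext (mkB_11 u v r)

lemma bor_eq_mkB (m : ↥(BorelGL 2 R)) :
    m = mkB (uBor m) (vBor m) ((m : GL (Fin 2) R).val 0 1) := by
  refine Subtype.ext (Units.ext ?_)
  rw [mkB_val]
  ext i j
  fin_cases i <;> fin_cases j
  · rfl
  · rfl
  · exact (bor_10 m).trans (by simp)
  · rfl

lemma exists_mkB (m : ↥(BorelGL 2 R)) : ∃ u v r, m = mkB u v r :=
  ⟨_, _, _, bor_eq_mkB m⟩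

end MkB

section PsiB
open Polynomial
variable {Fq : Type*} [Field Fq]

noncomputable def psiB (Φ : Polynomial Fq ≃ₗ[Fq] Polynomial Fq) :
    ↥(BorelGL 2 (Polynomial Fq)) ≃* ↥(BorelGL 2 (Polynomial Fq)) where
  toFun m := mkB (uBor m) (vBor m) (Φ ((m : GL (Fin 2) (Polynomial Fq)).val 0 1))
  invFun m := mkB (uBor m) (vBor m) (Φ.symm ((m : GL (Fin 2) (Polynomial Fq)).val 0 1))
  left_inv m := by
    obtain ⟨u, v, r, rfl⟩ := exists_mkB m
    simp [mkB_01]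
  right_inv m := by
    obtain ⟨u, v, r, rfl⟩ := exists_mkB m
    simp [mkB_01]
  map_mul' m n := by
    obtain ⟨u, v, r, rfl⟩ := exists_mkB m
    obtain ⟨u', v', r', rfl⟩ := exists_mkB n
    rw [mkB_mul]
    simp only [uBor_mkB, vBor_mkB, mkB_01]
    rw [mkB_mul]
    congr 1
    rw [map_add]
    have h1 := lin_unit_mul (Φ : Polynomial Fq →ₗ[Fq] Polynomial Fq) (↑u) r' u.isUnit
    have h2 := lin_unit_mul (Φ : Polynomial Fq →ₗ[Fq] Polynomial Fq) (↑v') r v'.isUnit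
    simp only [LinearEquiv.coe_coe] at h1 h2
    rw [h1, mul_comm r ((v' : Polynomial Fq)), h2]; ring

lemma psiB_mkB (Φ : Polynomial Fq ≃ₗ[Fq] Polynomial Fq) (u v : (Polynomial Fq)ˣ)
    (r : Polynomial Fq) : psiB Φ (mkB u v r) = mkB u v (Φ r) := by
  show mkB _ _ _ = _
  rw [uBor_mkB, vBor_mkB, mkB_01]

variable [Fintype Fq]

lemma class_mkB (Φ : Polynomial Fq ≃ₗ[Fq] Polynomial Fq)
    (hsurj2 : ∀ a b : Fq, a ≠ 0 → b ≠ 0 → Function.Surjective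
      (fun s : Polynomial Fq => s * Polynomial.C b - Polynomial.C a * Φ s))
    (u v : (Polynomial Fq)ˣ) (r : Polynomial Fq) :
    TwistedConjClass (psiB Φ) (mkB u v r) = TwistedConjClass (psiB Φ) (mkB u v 0) := by
  obtain ⟨a, hau, ha⟩ := Polynomial.isUnit_iff.mp u.isUnit
  obtain ⟨b, hbv, hb⟩ := Polynomial.isUnit_iff.mp v.isUnit
  have ha0 : a ≠ 0 := fun h => by simp [h] at hau
  have hb0 : b ≠ 0 := fun h => by simp [h] at hbv
  obtain ⟨s, hs⟩ := hsurj2 a b ha0 hb0 r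
  simp only at hs
  have key : mkB u v r = mkB 1 1 s * mkB u v 0 * (psiB Φ (mkB 1 1 s))⁻¹ := by
    rw [psiB_mkB, mkB_inv, mkB_mul, mkB_mul]
    congr 1
    · simp
    · simp
    · simp only [one_mul, mul_one, Units.val_one, inv_one, mul_zero, zero_add]
      rw [← ha, ← hb]
      linear_combination -hs
  rw [key, twisted_shift]

lemma reidemeister_bor_finite (Φ : Polynomial Fq ≃ₗ[Fq] Polynomial Fq)
    (hsurj2 : ∀ a b : Fq, a ≠ 0 → b ≠ 0 → Function.Surjective
      (fun s : Polynomial Fq => s * Polynomial.C b - Polynomial.C a * Φ s)) :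
    (ReidemeisterClasses (psiB Φ)).Finite := by
  have : Finite (Polynomial Fq)ˣ := units_finite
  apply Set.Finite.subset (Set.finite_range
    (fun p : (Polynomial Fq)ˣ × (Polynomial Fq)ˣ => TwistedConjClass (psiB Φ) (mkB p.1 p.2 0)))
  rintro _ ⟨g, rfl⟩
  refine ⟨(uBor g, vBor g), ?_⟩
  conv_rhs => rw [bor_eq_mkB g]
  rw [class_mkB Φ hsurj2]

end PsiB

lemma addclass_univ {A : Type*} [AddCommGroup A] (α : A ≃+ A)
    (hs : Function.Surjective (fun x => x - α x)) (b : A) :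
    AddTwistedConjClass α b = Set.univ := by
  ext y
  simp only [AddTwistedConjClass, Set.mem_setOf_eq, Set.mem_univ, iff_true]
  obtain ⟨x, hx⟩ := hs (y - b)
  simp only at hx
  exact ⟨x, by rw [← sub_add_cancel y b, ← hx]; abel⟩

end Aux

/-- Over `F_q[t]`: (i) there is an additive automorphism `Φ` of
`(F_q[t],+)` such that for every `a ∈ F_qˣ` the map `r ↦ r - a·Φ(r)` is surjective (so the
automorphism `r ↦ a·Φ(r)` has exactly one twisted conjugacy class); (ii) `Aff(F_q[t])` has
an automorphism with finitely many twisted conjugacy classes; (iii) so does `B_2(F_q[t])`.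
In particular none of `(F_q[t],+)`, `Aff(F_q[t])`, `B_2(F_q[t])` has property `R∞`. -/
theorem statement_17 (Fq : Type*) [Field Fq] [Fintype Fq] :
    (∃ Φ : Polynomial Fq ≃+ Polynomial Fq,
      ∀ a : Fqˣ,
        (Function.Surjective
          (fun r : Polynomial Fq => r - Polynomial.C (a : Fq) * Φ r)) ∧
        (∃ β : Polynomial Fq ≃+ Polynomial Fq,
          (∀ r : Polynomial Fq, β r = Polynomial.C (a : Fq) * Φ r) ∧
          (∃! C : Set (Polynomial Fq), C ∈ AddReidemeisterClasses β))) ∧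
    (∃ ψ : ↥(AffGL (Polynomial Fq)) ≃* ↥(AffGL (Polynomial Fq)),
      (ReidemeisterClasses ψ).Finite) ∧
    (∃ ψ : ↥(BorelGL 2 (Polynomial Fq)) ≃* ↥(BorelGL 2 (Polynomial Fq)),
      (ReidemeisterClasses ψ).Finite) ∧
    ¬ AddPropertyRInfinity (Polynomial Fq) ∧
    ¬ PropertyRInfinity ↥(AffGL (Polynomial Fq)) ∧
    ¬ PropertyRInfinity ↥(BorelGL 2 (Polynomial Fq)) := by
  classical
  have hsA : ∀ c : Fq, c ≠ 0 → Function.Surjective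
      (fun r : Polynomial Fq => r - Polynomial.C c * PhiLin Fq r) :=
    fun c hc => PhiLin_surj Fq hc
  refine ⟨⟨(PhiLin Fq).toAddEquiv, fun a => ?_⟩,
    ⟨psiAff (PhiLin Fq), reidemeister_aff_finite _ hsA⟩,
    ⟨psiB (PhiLin Fq), reidemeister_bor_finite _ (fun c b hc hb => PhiLin_surj2 Fq hc hb)⟩,
    ?_, ?_, ?_⟩
  · have hs : Function.Surjective
        (fun r : Polynomial Fq => r - Polynomial.C (a : Fq) * PhiLin Fq r) :=
      hsA (a : Fq) (Units.ne_zero a)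
    refine ⟨hs, ?_⟩
    set βl : Polynomial Fq ≃ₗ[Fq] Polynomial Fq :=
      PhiLin Fq ≪≫ₗ LinearEquiv.smulOfNeZero Fq (Polynomial Fq) (a : Fq) (Units.ne_zero a)
      with hβl
    have hβ : ∀ r, βl.toAddEquiv r = Polynomial.C (a : Fq) * (PhiLin Fq).toAddEquiv r := by
      intro r
      show (a : Fq) • PhiLin Fq r = _
      rw [Polynomial.smul_eq_C_mul]
      rfl
    refine ⟨βl.toAddEquiv, hβ, ?_⟩
    have hβs : Function.Surjective (fun x => x - βl.toAddEquiv x) := by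
      have hfun : (fun x => x - βl.toAddEquiv x) =
          (fun r : Polynomial Fq => r - Polynomial.C (a : Fq) * PhiLin Fq r) :=
        funext fun x => by rw [hβ x]; rfl
      rw [hfun]
      exact hs
    have hclass := addclass_univ βl.toAddEquiv hβs
    refine ⟨Set.univ, ⟨0, hclass 0⟩, ?_⟩
    rintro S ⟨b, rfl⟩
    exact hclass b
  · intro h
    have hs1 := hsA 1 one_ne_zero
    have hs1' : Function.Surjective (fun x => x - (PhiLin Fq).toAddEquiv x) := by
      have hfun : (fun x => x - (PhiLin Fq).toAddEquiv x) =
          (fun r : Polynomial Fq => r - Polynomial.C (1 : Fq) * PhiLin Fq r) :=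
        funext fun x => by rw [Polynomial.C_1, one_mul]; rfl
      rw [hfun]
      exact hs1
    have hclass := addclass_univ (PhiLin Fq).toAddEquiv hs1'
    have hfin : (AddReidemeisterClasses (PhiLin Fq).toAddEquiv).Finite := by
      apply Set.Finite.subset (Set.finite_singleton Set.univ)
      rintro _ ⟨b, rfl⟩
      exact Set.mem_singleton_iff.mpr (hclass b)
    exact h (PhiLin Fq).toAddEquiv hfin
  · intro h
    exact h (psiAff (PhiLin Fq)) (reidemeister_aff_finite _ hsA)
  · intro h
    exact h (psiB (PhiLin Fq)) (reidemeister_bor_finite _ (fun c b hc hb => PhiLin_surj2 Fq hc hb))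
end
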